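/- arXiv:1503.01149 — 2 statements merged into one kernel-verified Lean document; each statement's English description precedes it below -/
import Mathlib

section
/- Let K be an algebraically closed field of characteristic 0, let d ≥ 5, and let F ∈ K[X,Y,Z] be a nonsingular homogeneous polynomial of degree d. If Aut(F) contains an element of order ℓ·d for some integer ℓ with 2 ≤ ℓ ≤ d−1, then ℓ divides d−1 or ℓ divides d−2. -/
open MvPolynomial Matrix

noncomputable section

variable {K : Type*} [Field K]

/-- The substitution `F ∘ A`, i.e. `X i ↦ ∑ j, A i j • X j`. -/
def substPoly (A : Matrix (Fin 3) (Fin 3) K) (F : MvPolynomial (Fin 3) K) :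
    MvPolynomial (Fin 3) K :=
  aeval (fun i => ∑ j, A i j • X j) F

lemma substPoly_one (F : MvPolynomial (Fin 3) K) : substPoly 1 F = F := by
  have h : (fun i => ∑ j, (1 : Matrix (Fin 3) (Fin 3) K) i j • X j)
      = (X : Fin 3 → MvPolynomial (Fin 3) K) := by
    funext i
    simp [Matrix.one_apply, ite_smul]
  rw [substPoly, h]
  exact aeval_X_left_apply F

lemma substPoly_smul (A : Matrix (Fin 3) (Fin 3) K) (c : K) (F : MvPolynomial (Fin 3) K) :
    substPoly A (c • F) = c • substPoly A F := by
  unfold substPoly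
  exact _root_.map_smul (aeval fun i => ∑ j, A i j • X j) c F

lemma substPoly_mul (A B : Matrix (Fin 3) (Fin 3) K) (F : MvPolynomial (Fin 3) K) :
    substPoly (A * B) F = substPoly B (substPoly A F) := by
  have hfun : (fun i => ∑ j, (A * B) i j • (X j : MvPolynomial (Fin 3) K))
      = fun i => (aeval fun i => (∑ j, B i j • X j : MvPolynomial (Fin 3) K))
          (∑ j, A i j • X j : MvPolynomial (Fin 3) K) := by
    funext i
    rw [map_sum]
    simp only [_root_.map_smul, aeval_X, Matrix.mul_apply, Finset.sum_smul, Finset.smul_sum, smul_smul]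
    exact Finset.sum_comm
  have h1 : substPoly (A * B) F
      = aeval (fun i => (aeval fun i => (∑ j, B i j • X j : MvPolynomial (Fin 3) K))
          (∑ j, A i j • X j : MvPolynomial (Fin 3) K)) F := by
    unfold substPoly
    exact congrArg
      (fun f => (aeval f : MvPolynomial (Fin 3) K →ₐ[K] MvPolynomial (Fin 3) K) F) hfun
  rw [h1, ← MvPolynomial.comp_aeval]
  rfl

/-- The subgroup of `GL₃(K)` preserving the polynomial `F` up to scalar. -/
def autGL (F : MvPolynomial (Fin 3) K) : Subgroup (GL (Fin 3) K) where
  carrier := {A | ∃ c : Kˣ, substPoly (A : Matrix (Fin 3) (Fin 3) K) F = (c : K) • F}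
  one_mem' := ⟨1, by simp [substPoly_one]⟩
  mul_mem' := by
    rintro A B ⟨c, hc⟩ ⟨e, he⟩
    refine ⟨c * e, ?_⟩
    have hAB : ((A * B : GL (Fin 3) K) : Matrix (Fin 3) (Fin 3) K)
        = (A : Matrix (Fin 3) (Fin 3) K) * (B : Matrix (Fin 3) (Fin 3) K) := rfl
    rw [hAB, substPoly_mul, hc, substPoly_smul, he, smul_smul, ← Units.val_mul]
  inv_mem' := by
    rintro A ⟨c, hc⟩
    refine ⟨c⁻¹, ?_⟩
    have key : (c : K) • substPoly ((A⁻¹ : GL (Fin 3) K) : Matrix (Fin 3) (Fin 3) K) F = F := by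
      rw [← substPoly_smul, ← hc, ← substPoly_mul]
      have h1 : (A : Matrix (Fin 3) (Fin 3) K) *
          ((A⁻¹ : GL (Fin 3) K) : Matrix (Fin 3) (Fin 3) K) = 1 := by
        exact_mod_cast Units.mul_inv A
      rw [h1, substPoly_one]
    calc substPoly ((A⁻¹ : GL (Fin 3) K) : Matrix (Fin 3) (Fin 3) K) F
        = ((c : K)⁻¹ * (c : K)) •
            substPoly ((A⁻¹ : GL (Fin 3) K) : Matrix (Fin 3) (Fin 3) K) F := by
          rw [inv_mul_cancel₀ (Units.ne_zero c), one_smul]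
      _ = (c : K)⁻¹ • ((c : K) •
            substPoly ((A⁻¹ : GL (Fin 3) K) : Matrix (Fin 3) (Fin 3) K) F) := by
          rw [smul_smul]
      _ = (c : K)⁻¹ • F := by rw [key]
      _ = ((c⁻¹ : Kˣ) : K) • F := by rw [Units.val_inv_eq_inv_val]

/-- `PGL₃(K)`: the quotient of `GL₃(K)` by its center (the scalar matrices). -/
abbrev PGL3 (K : Type*) [Field K] := GL (Fin 3) K ⧸ Subgroup.center (GL (Fin 3) K)

/-- The automorphism group of the plane curve `F = 0`, as a subgroup of `PGL₃(K)`: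
the classes of matrices `A` with `F ∘ A = λ • F` for some `λ ∈ Kˣ`. -/
def projAut (F : MvPolynomial (Fin 3) K) : Subgroup (PGL3 K) :=
  (autGL F).map (QuotientGroup.mk' (Subgroup.center (GL (Fin 3) K)))

/-- `F` is nonsingular: the only common zero of its partial derivatives is the origin. -/
def IsNonsingular (F : MvPolynomial (Fin 3) K) : Prop :=
  ∀ x : Fin 3 → K, (∀ i, eval x (pderiv i F) = 0) → x = 0

/-- `F` and `G` are projectively equivalent: `F ∘ A = λ • G` for some `A ∈ GL₃(K)`, `λ ∈ Kˣ`. -/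
def ProjEquiv (F G : MvPolynomial (Fin 3) K) : Prop :=
  ∃ A : GL (Fin 3) K, ∃ c : Kˣ,
    substPoly (A : Matrix (Fin 3) (Fin 3) K) F = (c : K) • G



/-! ### Auxiliary lemmas -/

section Aux

private lemma keyZ (n a b c : ℤ) (hB : ∃ x y z : ℤ, x*a + y*b + z*n = 1)
    (h1 : n ∣ c*a) (h2 : n ∣ c*b) : n ∣ c := by
  obtain ⟨x, y, z, hxyz⟩ := hB
  obtain ⟨u, hu⟩ := h1
  obtain ⟨v, hv⟩ := h2
  exact ⟨x*u + y*v + z*c, by linear_combination x*hu + y*hv - c*hxyz⟩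

private lemma nd1 {d l : ℤ} (hd : 5 ≤ d) (hl : 2 ≤ l) : ¬ l*d ∣ d - 1 := by
  intro h
  have := Int.le_of_dvd (by omega) h
  nlinarith

private lemma nd2 {d l : ℤ} (hd : 5 ≤ d) (hl : 2 ≤ l) : ¬ l*d ∣ d := by
  intro h
  have := Int.le_of_dvd (by omega) h
  nlinarith

private lemma nd3 {d l : ℤ} (hd : 5 ≤ d) (hl : 2 ≤ l) : ¬ l*d ∣ (d-1)*(d-1) := by
  intro h
  obtain ⟨q, hq⟩ := (dvd_mul_left d l).trans h
  have h1 : d ∣ 1 := ⟨q - (d-2), by linear_combination hq⟩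
  have := Int.le_of_dvd one_pos h1
  omega

private lemma nd4 {d l : ℤ} (hd : 5 ≤ d) (hl : 2 ≤ l) : ¬ l*d ∣ (d-1)*(d-2) := by
  intro h
  obtain ⟨q, hq⟩ := (dvd_mul_left d l).trans h
  have h1 : d ∣ 2 := ⟨q - (d-3), by linear_combination hq⟩
  have := Int.le_of_dvd (by norm_num) h1
  omega

private lemma nd5 {d l : ℤ} (hd : 5 ≤ d) (hl : 2 ≤ l) : ¬ l*d ∣ d*d - 3*d + 3 := by
  intro h
  obtain ⟨q, hq⟩ := (dvd_mul_left d l).trans h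
  have h1 : d ∣ 3 := ⟨q - (d-3), by linear_combination hq⟩
  have := Int.le_of_dvd (by norm_num) h1
  omega

private lemma yd1 {d l : ℤ} (hd : 5 ≤ d) (h : l*d ∣ d*(d-1)) : l ∣ d - 1 := by
  obtain ⟨q, hq⟩ := h
  exact ⟨q, mul_left_cancel₀ (show (d:ℤ) ≠ 0 by omega) (by linear_combination hq)⟩

private lemma yd2 {d l : ℤ} (hd : 5 ≤ d) (h : l*d ∣ d*(d-2)) : l ∣ d - 2 := by
  obtain ⟨q, hq⟩ := h
  exact ⟨q, mul_left_cancel₀ (show (d:ℤ) ≠ 0 by omega) (by linear_combination hq)⟩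

private lemma caseA (d l a b L : ℤ) (hd : 5 ≤ d) (hl : 2 ≤ l)
    (hB : ∃ x y z : ℤ, x*a + y*b + z*(l*d) = 1)
    (h0 : l*d ∣ 0 - L)
    (h1 : ∃ E, (E = 0 ∨ E = a ∨ E = b) ∧ l*d ∣ (d-1)*a + E - L)
    (h2 : ∃ E, (E = 0 ∨ E = a ∨ E = b) ∧ l*d ∣ (d-1)*b + E - L) :
    l ∣ d - 1 ∨ l ∣ d - 2 := by
  obtain ⟨p, hp⟩ := h0
  obtain ⟨E1, hE1, q, hq⟩ := h1
  obtain ⟨E2, hE2, r, hr⟩ := h2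
  rcases hE1 with h1' | h1' | h1' <;> rcases hE2 with h2' | h2' | h2' <;>
    rw [h1'] at hq <;> rw [h2'] at hr
  · exact absurd (keyZ _ a b (d-1) hB ⟨q - p, by linear_combination hq - hp⟩
      ⟨r - p, by linear_combination hr - hp⟩) (nd1 hd hl)
  · exact absurd (keyZ _ a b ((d-1)*(d-1)) hB ⟨(d-1)*q - (d-1)*p, by linear_combination (d-1)*hq - (d-1)*hp⟩
      ⟨(d-1)*r - q - (d-2)*p, by linear_combination (d-1)*hr - hq - (d-2)*hp⟩) (nd3 hd hl)
  · exact Or.inl (yd1 hd (keyZ _ a b (d*(d-1)) hB ⟨d*q - d*p, by linear_combination d*hq - d*hp⟩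
      ⟨(d-1)*r - (d-1)*p, by linear_combination (d-1)*hr - (d-1)*hp⟩))
  · exact Or.inl (yd1 hd (keyZ _ a b (d*(d-1)) hB ⟨(d-1)*q - (d-1)*p, by linear_combination (d-1)*hq - (d-1)*hp⟩
      ⟨d*r - d*p, by linear_combination d*hr - d*hp⟩))
  · exact Or.inl (yd1 hd (keyZ _ a b (d*(d-1)) hB ⟨(d-1)*q - (d-1)*p, by linear_combination (d-1)*hq - (d-1)*hp⟩
      ⟨d*r - q - (d-1)*p, by linear_combination d*hr - hq - (d-1)*hp⟩))
  · exact absurd (keyZ _ a b d hB ⟨q - p, by linear_combination hq - hp⟩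
      ⟨r - p, by linear_combination hr - hp⟩) (nd2 hd hl)
  · exact absurd (keyZ _ a b ((d-1)*(d-1)) hB ⟨(d-1)*q - r - (d-2)*p, by linear_combination (d-1)*hq - hr - (d-2)*hp⟩
      ⟨(d-1)*r - (d-1)*p, by linear_combination (d-1)*hr - (d-1)*hp⟩) (nd3 hd hl)
  · exact Or.inr (yd2 hd (keyZ _ a b (d*(d-2)) hB ⟨(d-1)*q - r - (d-2)*p, by linear_combination (d-1)*hq - hr - (d-2)*hp⟩
      ⟨(d-1)*r - q - (d-2)*p, by linear_combination (d-1)*hr - hq - (d-2)*hp⟩))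
  · exact Or.inl (yd1 hd (keyZ _ a b (d*(d-1)) hB ⟨d*q - r - (d-1)*p, by linear_combination d*hq - hr - (d-1)*hp⟩
      ⟨(d-1)*r - (d-1)*p, by linear_combination (d-1)*hr - (d-1)*hp⟩))

private lemma caseB (d l a b L : ℤ) (hd : 5 ≤ d) (hl : 2 ≤ l)
    (hB : ∃ x y z : ℤ, x*a + y*b + z*(l*d) = 1)
    (h0 : l*d ∣ a - L)
    (h1 : ∃ E, (E = 0 ∨ E = a ∨ E = b) ∧ l*d ∣ (d-1)*a + E - L)
    (h2 : ∃ E, (E = 0 ∨ E = a ∨ E = b) ∧ l*d ∣ (d-1)*b + E - L) :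
    l ∣ d - 1 ∨ l ∣ d - 2 := by
  obtain ⟨p, hp⟩ := h0
  obtain ⟨E1, hE1, q, hq⟩ := h1
  obtain ⟨E2, hE2, r, hr⟩ := h2
  rcases hE1 with h1' | h1' | h1' <;> rcases hE2 with h2' | h2' | h2' <;>
    rw [h1'] at hq <;> rw [h2'] at hr
  · exact absurd (keyZ _ a b ((d-1)*(d-2)) hB ⟨(d-1)*q - (d-1)*p, by linear_combination (d-1)*hq - (d-1)*hp⟩
      ⟨(d-2)*r + q - (d-1)*p, by linear_combination (d-2)*hr + hq - (d-1)*hp⟩) (nd4 hd hl)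
  · exact absurd (keyZ _ a b ((d-1)*(d-2)) hB ⟨(d-1)*q - (d-1)*p, by linear_combination (d-1)*hq - (d-1)*hp⟩
      ⟨(d-2)*r - (d-2)*p, by linear_combination (d-2)*hr - (d-2)*hp⟩) (nd4 hd hl)
  · exact Or.inr (yd2 hd (keyZ _ a b (d*(d-2)) hB ⟨d*q - d*p, by linear_combination d*hq - d*hp⟩
      ⟨(d-2)*r + q - (d-1)*p, by linear_combination (d-2)*hr + hq - (d-1)*hp⟩))
  · exact absurd (keyZ _ a b ((d-1)*(d-1)) hB ⟨(d-1)*q - (d-1)*p, by linear_combination (d-1)*hq - (d-1)*hp⟩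
      ⟨(d-1)*r + q - d*p, by linear_combination (d-1)*hr + hq - d*hp⟩) (nd3 hd hl)
  · exact absurd (keyZ _ a b (d-1) hB ⟨q - p, by linear_combination hq - hp⟩
      ⟨r - p, by linear_combination hr - hp⟩) (nd1 hd hl)
  · exact Or.inl (yd1 hd (keyZ _ a b (d*(d-1)) hB ⟨d*q - d*p, by linear_combination d*hq - d*hp⟩
      ⟨(d-1)*r + q - d*p, by linear_combination (d-1)*hr + hq - d*hp⟩))
  · exact absurd (keyZ _ a b (d*d - 3*d + 3) hB ⟨(d-1)*q - r - (d-2)*p, by linear_combination (d-1)*hq - hr - (d-2)*hp⟩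
      ⟨q + (d-2)*r - (d-1)*p, by linear_combination hq + (d-2)*hr - (d-1)*hp⟩) (nd5 hd hl)
  · exact absurd (keyZ _ a b ((d-1)*(d-2)) hB ⟨(d-1)*q - r - (d-2)*p, by linear_combination (d-1)*hq - hr - (d-2)*hp⟩
      ⟨(d-2)*r - (d-2)*p, by linear_combination (d-2)*hr - (d-2)*hp⟩) (nd4 hd hl)
  · exact absurd (keyZ _ a b ((d-1)*(d-1)) hB ⟨d*q - r - (d-1)*p, by linear_combination d*hq - hr - (d-1)*hp⟩
      ⟨q + (d-2)*r - (d-1)*p, by linear_combination hq + (d-2)*hr - (d-1)*hp⟩) (nd3 hd hl)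

private lemma coreZ (d l : ℤ) (hd : 5 ≤ d) (hl : 2 ≤ l) (a b L : ℤ)
    (hB : ∃ x y z : ℤ, x*a + y*b + z*(l*d) = 1)
    (h0 : l*d ∣ 0 - L ∨ l*d ∣ a - L ∨ l*d ∣ b - L)
    (h1 : ∃ E, (E = 0 ∨ E = a ∨ E = b) ∧ l*d ∣ (d-1)*a + E - L)
    (h2 : ∃ E, (E = 0 ∨ E = a ∨ E = b) ∧ l*d ∣ (d-1)*b + E - L) :
    l ∣ d - 1 ∨ l ∣ d - 2 := by
  have hB' : ∃ x y z : ℤ, x*b + y*a + z*(l*d) = 1 := by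
    obtain ⟨x, y, z, hxyz⟩ := hB
    exact ⟨y, x, z, by linarith⟩
  have flip : ∀ E : ℤ, (E = 0 ∨ E = a ∨ E = b) → (E = 0 ∨ E = b ∨ E = a) := by tauto
  rcases h0 with h0 | h0 | h0
  · exact caseA d l a b L hd hl hB h0 h1 h2
  · exact caseB d l a b L hd hl hB h0 h1 h2
  · rcases caseB d l b a L hd hl hB' h0
      (h2.imp fun E ⟨hE, h⟩ => ⟨flip E hE, h⟩)
      (h1.imp fun E ⟨hE, h⟩ => ⟨flip E hE, h⟩) with h | h
    · exact Or.inl h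
    · exact Or.inr h

private lemma prim_dvd_sub {n : ℕ} (hn : n ≠ 0) {ζ : K} (hζ : IsPrimitiveRoot ζ n) {x y : ℕ}
    (h : ζ ^ x = ζ ^ y) : (n:ℤ) ∣ (x:ℤ) - y := by
  rw [← hζ.zpow_eq_one_iff_dvd]
  have hz : ζ ≠ 0 := hζ.ne_zero hn
  rw [zpow_sub₀ hz, zpow_natCast, zpow_natCast, h, div_self (pow_ne_zero _ hz)]

private lemma prod_pow_single (ν : Fin 3 → K) (t : Fin 3) (k : ℕ) :
    ∏ i, ν i ^ (Finsupp.single t k) i = ν t ^ k := by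
  rw [Finset.prod_eq_single t]
  · simp
  · intro i _ hi
    simp [Finsupp.single_apply, Ne.symm hi]
  · intro h
    simp at h

private lemma pderiv_aeval_eq (g : Fin 3 → MvPolynomial (Fin 3) K)
    (F : MvPolynomial (Fin 3) K) (i : Fin 3) :
    pderiv i (aeval g F) = ∑ j, aeval g (pderiv j F) * pderiv i (g j) := by
  induction F using MvPolynomial.induction_on with
  | C a => simp only [aeval_C, algebraMap_eq, pderiv_C, map_zero, zero_mul,
      Finset.sum_const_zero]
  | add p q hp hq =>
    simp only [map_add, hp, hq, add_mul, Finset.sum_add_distrib]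
  | mul_X p s hp =>
    rw [_root_.map_mul, aeval_X, pderiv_mul, hp]
    have hr : ∀ j : Fin 3, aeval g (pderiv j (p * X s)) * pderiv i (g j)
        = aeval g (pderiv j p) * pderiv i (g j) * g s
          + (if j = s then aeval g p * pderiv i (g j) else 0) := by
      intro j
      rw [pderiv_mul, map_add, _root_.map_mul, _root_.map_mul, aeval_X]
      by_cases h : j = s
      · subst h
        rw [pderiv_X_self, if_pos rfl, _root_.map_one]
        ring
      · rw [pderiv_X_of_ne (Ne.symm h), map_zero, mul_zero, add_zero, if_neg h, add_zero]
        ring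
    rw [Finset.sum_congr rfl (fun j _ => hr j), Finset.sum_add_distrib, ← Finset.sum_mul,
      Finset.sum_ite_eq' Finset.univ s (fun j => aeval g p * pderiv i (g j))]
    simp

private lemma eval_substPoly (A : Matrix (Fin 3) (Fin 3) K) (F : MvPolynomial (Fin 3) K)
    (x : Fin 3 → K) :
    eval x (substPoly A F) = eval (A.mulVec x) F := by
  unfold substPoly
  induction F using MvPolynomial.induction_on with
  | C a => simp only [aeval_C, algebraMap_eq, eval_C]
  | add p q hp hq => simp only [map_add, hp, hq]
  | mul_X p s hp =>
    rw [_root_.map_mul, aeval_X, _root_.map_mul, _root_.map_mul, hp, eval_X]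
    congr 1
    simp [Matrix.mulVec, dotProduct, smul_eq_C_mul]

private lemma isHomogeneous_substPoly {F : MvPolynomial (Fin 3) K} {d : ℕ}
    (h : F.IsHomogeneous d) (A : Matrix (Fin 3) (Fin 3) K) :
    (substPoly A F).IsHomogeneous d := by
  have hg : ∀ i, (∑ j, A i j • X j : MvPolynomial (Fin 3) K).IsHomogeneous 1 := by
    intro i
    apply MvPolynomial.IsHomogeneous.sum
    intro j _
    rw [smul_eq_C_mul]
    simpa using (isHomogeneous_C _ (A i j)).mul (isHomogeneous_X _ j)
  simpa [substPoly] using h.aeval _ hg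

private lemma isNonsingular_substPoly {F : MvPolynomial (Fin 3) K} (hns : IsNonsingular F)
    (A B : Matrix (Fin 3) (Fin 3) K) (hAB : A * B = 1) (hBA : B * A = 1) :
    IsNonsingular (substPoly A F) := by
  intro x hx
  set g : Fin 3 → MvPolynomial (Fin 3) K := fun i => ∑ j, A i j • X j with hg
  have hgd : ∀ j i, pderiv i (g j) = C (A j i) := by
    intro j i
    rw [hg]
    rw [map_sum]
    have : ∀ k : Fin 3, pderiv i (A j k • X k) = if k = i then C (A j k) else 0 := by
      intro k
      rw [smul_eq_C_mul, pderiv_C_mul]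
      by_cases h : k = i
      · subst h; rw [pderiv_X_self, if_pos rfl, mul_one]
      · rw [pderiv_X_of_ne h, if_neg h, mul_zero]
    rw [Finset.sum_congr rfl (fun k _ => this k), Finset.sum_ite_eq' Finset.univ i
      (fun k => C (A j k))]
    simp
  set w : Fin 3 → K := fun j => eval (A.mulVec x) (pderiv j F) with hw
  have hvm : ∀ i, ∑ j, w j * A j i = 0 := by
    intro i
    have h1 := hx i
    rw [show substPoly A F = aeval g F from rfl, pderiv_aeval_eq] at h1
    rw [map_sum] at h1
    have h2 : ∀ j : Fin 3, eval x (aeval g (pderiv j F) * pderiv i (g j)) = w j * A j i := by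
      intro j
      rw [_root_.map_mul, hgd j i, eval_C, hw]
      congr 1
      exact eval_substPoly A (pderiv j F) x
    rwa [Finset.sum_congr rfl (fun j _ => h2 j)] at h1
  have hw0 : w = 0 := by
    have h3 : Matrix.vecMul w A = 0 := by
      funext i
      exact hvm i
    have h4 : Matrix.vecMul (Matrix.vecMul w A) B = w := by
      rw [Matrix.vecMul_vecMul, hAB, Matrix.vecMul_one]
    rw [h3] at h4
    rw [← h4]
    simp [Matrix.vecMul]
  have h5 : A.mulVec x = 0 := by
    apply hns
    intro i
    have := congrFun hw0 i
    simpa [hw] using this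
  have h6 : x = B.mulVec (A.mulVec x) := by
    rw [Matrix.mulVec_mulVec, hBA, Matrix.one_mulVec]
  rw [h6, h5, Matrix.mulVec_zero]

private lemma substPoly_diagonal (ν : Fin 3 → K) (G : MvPolynomial (Fin 3) K) :
    substPoly (Matrix.diagonal ν) G
      = ∑ m ∈ G.support, monomial m ((∏ i, ν i ^ m i) * coeff m G) := by
  unfold substPoly
  have hg : (fun i => ∑ j, Matrix.diagonal ν i j • (X j : MvPolynomial (Fin 3) K))
      = fun i => C (ν i) * X i := by
    funext i
    rw [Finset.sum_eq_single i]
    · rw [Matrix.diagonal_apply_eq, smul_eq_C_mul]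
    · intro j _ hj
      rw [Matrix.diagonal_apply_ne _ (Ne.symm hj), zero_smul]
    · intro h
      simp at h
  rw [hg]
  conv_lhs => rw [G.as_sum]
  rw [map_sum]
  refine Finset.sum_congr rfl fun m _ => ?_
  rw [aeval_monomial, monomial_eq]
  have h1 : (m.prod fun i k => (C (ν i) * X i : MvPolynomial (Fin 3) K) ^ k)
      = C (∏ i, ν i ^ m i) * m.prod fun i k => (X i : MvPolynomial (Fin 3) K) ^ k := by
    rw [Finsupp.prod_fintype _ _ (fun i => pow_zero _),
      Finsupp.prod_fintype _ _ (fun i => pow_zero _)]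
    rw [map_prod, ← Finset.prod_mul_distrib]
    exact Finset.prod_congr rfl fun i _ => by rw [mul_pow, ← C_pow]
  rw [h1, algebraMap_eq, C_mul]
  ring

private lemma coeff_substPoly_diagonal (ν : Fin 3 → K) (G : MvPolynomial (Fin 3) K)
    (m : Fin 3 →₀ ℕ) :
    coeff m (substPoly (Matrix.diagonal ν) G) = (∏ i, ν i ^ m i) * coeff m G := by
  rw [substPoly_diagonal, MvPolynomial.coeff_sum]
  simp_rw [coeff_monomial]
  rw [Finset.sum_ite_eq' G.support m (fun m' => (∏ i, ν i ^ m' i) * coeff m' G)]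
  by_cases h : m ∈ G.support
  · rw [if_pos h]
  · rw [if_neg h, MvPolynomial.notMem_support_iff.mp h, mul_zero]

private lemma exists_support_mono {G : MvPolynomial (Fin 3) K} {d : ℕ} (hd : 1 ≤ d)
    (hG : G.IsHomogeneous d) (hns : IsNonsingular G) (t : Fin 3) :
    ∃ s : Fin 3, coeff (Finsupp.single t (d-1) + Finsupp.single s 1) G ≠ 0 := by
  by_contra hcon
  push_neg at hcon
  set et : Fin 3 → K := fun j => if j = t then 1 else 0 with het
  have h0 : et = 0 := by
    apply hns
    intro i
    have hder : pderiv i G = ∑ m ∈ G.support,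
        monomial (m - Finsupp.single i 1) (coeff m G * m i) := by
      conv_lhs => rw [G.as_sum]
      rw [map_sum]
      exact Finset.sum_congr rfl fun m _ => pderiv_monomial
    rw [hder, map_sum]
    refine Finset.sum_eq_zero fun m hm => ?_
    rw [eval_monomial]
    by_cases hmi : m i = 0
    · rw [hmi]
      simp
    by_cases hmm : m = Finsupp.single t (d-1) + Finsupp.single i 1
    · rw [hmm] at hm ⊢
      rw [hcon i]
      simp
    -- remaining case: some j ≠ t has (m - single i 1) j ≠ 0
    have hdeg : ∑ j, m j = d := by
      have h := hG (MvPolynomial.mem_support_iff.mp hm)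
      rw [show (1 : Fin 3 → ℕ) = fun _ => 1 from rfl, ← Finsupp.degree_eq_weight_one] at h
      rw [← h, Finsupp.degree_apply]
      exact (Finsupp.sum_fintype m (fun _ e => e) (fun _ => rfl)).symm
    have hj : ∃ j, j ≠ t ∧ (m - Finsupp.single i 1 : Fin 3 →₀ ℕ) j ≠ 0 := by
      by_contra hjc
      push_neg at hjc
      have hsub : ∀ j : Fin 3, (m - Finsupp.single i 1 : Fin 3 →₀ ℕ) j
          = m j - (Finsupp.single i 1 : Fin 3 →₀ ℕ) j :=
        fun j => Finsupp.tsub_apply m (Finsupp.single i 1) j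
      have hvi : ∀ j : Fin 3, j ≠ t → j ≠ i → m j = 0 := by
        intro j h1 h2
        have h3 := hjc j h1
        rw [hsub j, Finsupp.single_apply, if_neg (fun h => h2 h.symm)] at h3
        omega
      apply hmm
      by_cases hit : i = t
      · have hmd : m i = d := by
          rw [← hdeg]
          exact (Finset.sum_eq_single i (fun j _ hji => hvi j (fun h => hji (h.trans hit.symm)) hji)
            (fun h => absurd (Finset.mem_univ i) h)).symm
        ext j
        rw [Finsupp.add_apply, Finsupp.single_apply, Finsupp.single_apply, ← hit]
        by_cases hji : i = j
        · rw [if_pos hji, if_pos hji, ← hji, hmd]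
          omega
        · rw [if_neg hji, if_neg hji,
            hvi j (fun h => hji (hit.trans h.symm)) (fun h => hji h.symm)]
          omega
      · have hmi1 : m i = 1 := by
          have h3 := hjc i hit
          rw [hsub i, Finsupp.single_apply, if_pos rfl] at h3
          omega
        have hsum2 : ∑ j, m j = m t + m i := by
          rw [← Finset.sum_pair (show t ≠ i from fun h => hit h.symm)]
          symm
          apply Finset.sum_subset (Finset.subset_univ _)
          intro k _ hk
          simp only [Finset.mem_insert, Finset.mem_singleton] at hk
          push_neg at hk
          exact hvi k hk.1 hk.2
        have hmt : m t = d - 1 := by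
          have h4 := hdeg
          rw [hsum2] at h4
          omega
        ext j
        rw [Finsupp.add_apply, Finsupp.single_apply, Finsupp.single_apply]
        by_cases hjt : t = j
        · rw [if_pos hjt, if_neg (fun h : i = j => hit (h.trans hjt.symm)), ← hjt, hmt]
          omega
        · by_cases hji : i = j
          · rw [if_neg hjt, if_pos hji, ← hji, hmi1]
          · rw [if_neg hjt, if_neg hji,
              hvi j (fun h => hjt h.symm) (fun h => hji h.symm)]
            omega
    obtain ⟨j, hjt, hjne⟩ := hj
    have hfac : (Finsupp.prod (m - Finsupp.single i 1) fun n e => et n ^ e) = 0 := by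
      apply Finset.prod_eq_zero (Finsupp.mem_support_iff.mpr hjne)
      rw [het]
      simp only [if_neg hjt]
      exact zero_pow hjne
    rw [hfac, mul_zero]
  have : et t = 0 := by rw [h0]; rfl
  rw [het] at this
  simp at this


private lemma mem_center_GL_iff {A : GL (Fin 3) K} :
    A ∈ Subgroup.center (GL (Fin 3) K) ↔
      ∃ c : K, (A : Matrix (Fin 3) (Fin 3) K) = Matrix.scalar (Fin 3) c := by
  constructor
  · intro hA
    rw [Subgroup.mem_center_iff] at hA
    have hcomm : ∀ t : Matrix.TransvectionStruct (Fin 3) K,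
        Commute t.toMatrix (A : Matrix (Fin 3) (Fin 3) K) := by
      intro t
      have hu := hA ⟨t.toMatrix, t.inv.toMatrix, t.mul_inv, t.inv_mul⟩
      exact congrArg Units.val hu
    obtain ⟨c, hc⟩ := Matrix.mem_range_scalar_of_commute_transvectionStruct hcomm
    exact ⟨c, hc.symm⟩
  · rintro ⟨c, hc⟩
    rw [Subgroup.mem_center_iff]
    intro B
    apply Units.ext
    rw [Units.val_mul, Units.val_mul, hc]
    exact (Matrix.scalar_commute c (fun b => Commute.all c b) _).symm

private lemma exists_eigenbasis [IsAlgClosed K] [CharZero K] {n : ℕ} (hn : n ≠ 0)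
    (B : Matrix (Fin 3) (Fin 3) K) (hB : B ^ n = 1) :
    ∃ (b : Module.Basis (Fin 3) K (Fin 3 → K)) (μ : Fin 3 → K),
      ∀ j, B.mulVec (b j) = μ j • b j := by
  classical
  set f : Module.End K (Fin 3 → K) := Matrix.toLinAlgEquiv' B with hf
  have hfn : f ^ n = 1 := by rw [hf, ← map_pow, hB, _root_.map_one]
  have hsq : Squarefree (Polynomial.X ^ n - Polynomial.C (1:K)) :=
    (Polynomial.separable_X_pow_sub_C (1:K) (Nat.cast_ne_zero.mpr hn) one_ne_zero).squarefree
  have h0 : Polynomial.aeval f (Polynomial.X ^ n - Polynomial.C (1:K)) = 0 := by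
    rw [map_sub, Polynomial.aeval_X_pow, Polynomial.aeval_C, hfn, _root_.map_one, sub_self]
  have hss : f.IsSemisimple := Module.End.isSemisimple_of_squarefree_aeval_eq_zero hsq h0
  have hsup : ⨆ μ : K, f.eigenspace μ = ⊤ := by
    have h1 := Module.End.iSup_maxGenEigenspace_eq_top f
    have h2 : ∀ μ : K, f.eigenspace μ = f.maxGenEigenspace μ :=
      fun μ => (hss.isFinitelySemisimple.maxGenEigenspace_eq_eigenspace μ).symm
    rw [iSup_congr h2]
    exact h1
  have hind := f.eigenspaces_iSupIndep
  have hint : DirectSum.IsInternal f.eigenspace :=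
    (DirectSum.isInternal_submodule_iff_iSupIndep_and_iSup_eq_top _).mpr ⟨hind, hsup⟩
  let s : ∀ μ : K, Module.Basis (Module.Basis.ofVectorSpaceIndex K (f.eigenspace μ)) K (f.eigenspace μ) :=
    fun μ => Module.Basis.ofVectorSpace K _
  let b0 := hint.collectedBasis s
  haveI := FiniteDimensional.fintypeBasisIndex b0
  let e := b0.indexEquiv (Pi.basisFun K (Fin 3))
  refine ⟨b0.reindex e, fun j => (e.symm j).1, fun j => ?_⟩
  have hmem : b0 (e.symm j) ∈ f.eigenspace ((e.symm j).1) := hint.collectedBasis_mem s _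
  have heig := Module.End.mem_eigenspace_iff.mp hmem
  rw [Module.Basis.reindex_apply]
  rw [← heig]
  rfl


end Aux

/-- if a nonsingular plane curve of degree `d ≥ 5` has an automorphism of
order `ℓ·d` with `2 ≤ ℓ ≤ d-1`, then `ℓ ∣ d-1` or `ℓ ∣ d-2`. -/
theorem stmt9 {K : Type*} [Field K] [IsAlgClosed K] [CharZero K]
    (d : ℕ) (hd : 5 ≤ d) (F : MvPolynomial (Fin 3) K)
    (hhom : F.IsHomogeneous d) (hns : IsNonsingular F)
    (ℓ : ℕ) (hℓ1 : 2 ≤ ℓ) (hℓ2 : ℓ ≤ d - 1)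
    (h : ∃ g ∈ projAut F, orderOf g = ℓ * d) :
    ℓ ∣ d - 1 ∨ ℓ ∣ d - 2 := by
  classical
  set n : ℕ := ℓ * d with hn_def
  have hn0 : n ≠ 0 := by
    have : 0 < ℓ * d := Nat.mul_pos (by omega) (by omega)
    omega
  haveI : NeZero n := ⟨hn0⟩
  haveI : NeZero ((n : K)) := ⟨Nat.cast_ne_zero.mpr hn0⟩
  obtain ⟨g, hg, hord⟩ := h
  obtain ⟨A, hA, rfl⟩ := hg
  obtain ⟨c, hc⟩ := hA
  set π := QuotientGroup.mk' (Subgroup.center (GL (Fin 3) K)) with hπ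
  -- A^n is central, hence scalar
  have hcen : A ^ n ∈ Subgroup.center (GL (Fin 3) K) := by
    have h1 : π (A ^ n) = 1 := by
      rw [map_pow, ← hord]
      exact pow_orderOf_eq_one _
    have h2 : A ^ n ∈ MonoidHom.ker π := h1
    rwa [hπ, QuotientGroup.ker_mk'] at h2
  obtain ⟨c0, hc0⟩ := mem_center_GL_iff.mp hcen
  rw [Units.val_pow_eq_pow_val] at hc0
  have hc0ne : c0 ≠ 0 := by
    rintro rfl
    rw [map_zero] at hc0
    have h1 := (A ^ n).isUnit
    rw [Units.val_pow_eq_pow_val, hc0, Matrix.isUnit_iff_isUnit_det,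
      Matrix.det_zero, isUnit_zero_iff] at h1
    exact one_ne_zero h1.symm
  obtain ⟨γ, hγ⟩ := IsAlgClosed.exists_pow_nat_eq c0 (Nat.pos_of_ne_zero hn0)
  have hγne : γ ≠ 0 := by
    rintro rfl
    rw [zero_pow hn0] at hγ
    exact hc0ne hγ.symm
  set M : Matrix (Fin 3) (Fin 3) K := (A : Matrix (Fin 3) (Fin 3) K) with hM
  set B : Matrix (Fin 3) (Fin 3) K := γ⁻¹ • M with hB
  have hBn : B ^ n = 1 := by
    rw [hB, smul_pow, hc0, Matrix.scalar_apply, ← Matrix.diagonal_smul]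
    have : (γ⁻¹ ^ n • fun _ : Fin 3 => c0) = fun _ : Fin 3 => (1:K) := by
      funext i
      simp only [Pi.smul_apply, smul_eq_mul]
      rw [← hγ, inv_pow, inv_mul_cancel₀ (pow_ne_zero _ hγne)]
    rw [this, Matrix.diagonal_one]
  obtain ⟨bas, μ, hbas⟩ := exists_eigenbasis hn0 B hBn
  have hpow : ∀ (k : ℕ) (j : Fin 3), (B ^ k).mulVec (bas j) = μ j ^ k • bas j := by
    intro k j
    induction k with
    | zero => simp [Matrix.one_mulVec]
    | succ k ih =>
      rw [pow_succ, ← Matrix.mulVec_mulVec, hbas j, Matrix.mulVec_smul, ih, smul_smul,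
        ← pow_succ']
  have hμn : ∀ j, μ j ^ n = 1 := by
    intro j
    have h1 := hpow n j
    rw [hBn, Matrix.one_mulVec] at h1
    have h2 : (μ j ^ n - 1) • bas j = 0 := by
      rw [sub_smul, one_smul, ← h1, sub_self]
    rcases smul_eq_zero.mp h2 with h3 | h3
    · exact sub_eq_zero.mp h3
    · exact absurd h3 (bas.ne_zero j)
  set ν : Fin 3 → K := fun j => γ * μ j with hν_def
  have hMbas : ∀ j, M.mulVec (bas j) = ν j • bas j := by
    intro j
    have h1 : M = γ • B := by
      rw [hB, smul_smul, mul_inv_cancel₀ hγne, one_smul]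
    rw [h1, Matrix.smul_mulVec, hbas j, smul_smul]
  have hνn : ∀ j, ν j ^ n = c0 := by
    intro j
    rw [hν_def]
    simp only [mul_pow]
    rw [hμn j, hγ, mul_one]
  have hνne : ∀ j, ν j ≠ 0 := by
    intro j hj
    apply hc0ne
    rw [← hνn j, hj, zero_pow hn0]
  -- change of basis matrix
  set P : Matrix (Fin 3) (Fin 3) K := (Pi.basisFun K (Fin 3)).toMatrix bas with hP_def
  set Q : Matrix (Fin 3) (Fin 3) K := bas.toMatrix (Pi.basisFun K (Fin 3)) with hQ_def
  have hPQ : P * Q = 1 := Module.Basis.toMatrix_mul_toMatrix_flip _ _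
  have hQP : Q * P = 1 := Module.Basis.toMatrix_mul_toMatrix_flip _ _
  have hPapp : ∀ i j, P i j = bas j i := by
    intro i j
    rw [hP_def, Module.Basis.toMatrix_apply, Pi.basisFun_repr]
  have hMP : M * P = P * Matrix.diagonal ν := by
    ext i j
    rw [Matrix.mul_apply, Matrix.mul_diagonal, hPapp]
    have h1 : M.mulVec (bas j) i = ν j * bas j i := by
      rw [hMbas j]
      simp
    rw [Matrix.mulVec, dotProduct] at h1
    calc ∑ k, M i k * P k j = ∑ k, M i k * bas j k :=
          Finset.sum_congr rfl fun k _ => by rw [hPapp]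
      _ = ν j * bas j i := h1
      _ = bas j i * ν j := mul_comm _ _
  -- GL elements
  set PU : GL (Fin 3) K := ⟨P, Q, hPQ, hQP⟩ with hPU
  have hDinv : Matrix.diagonal ν * Matrix.diagonal (fun i => (ν i)⁻¹) = 1 := by
    rw [Matrix.diagonal_mul_diagonal]
    have : (fun i => ν i * (ν i)⁻¹) = fun _ : Fin 3 => (1:K) := by
      funext i
      rw [mul_inv_cancel₀ (hνne i)]
    rw [this, Matrix.diagonal_one]
  have hDinv' : Matrix.diagonal (fun i => (ν i)⁻¹) * Matrix.diagonal ν = 1 := by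
    rw [Matrix.diagonal_mul_diagonal]
    have : (fun i => (ν i)⁻¹ * ν i) = fun _ : Fin 3 => (1:K) := by
      funext i
      rw [inv_mul_cancel₀ (hνne i)]
    rw [this, Matrix.diagonal_one]
  set DU : GL (Fin 3) K := ⟨Matrix.diagonal ν, Matrix.diagonal (fun i => (ν i)⁻¹),
    hDinv, hDinv'⟩ with hDU_def
  have hDU : DU = PU⁻¹ * A * PU := by
    apply Units.ext
    show Matrix.diagonal ν = ((PU⁻¹ * A * PU : GL (Fin 3) K) : Matrix (Fin 3) (Fin 3) K)
    rw [Units.val_mul, Units.val_mul]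
    have hPUinv : ((PU⁻¹ : GL (Fin 3) K) : Matrix (Fin 3) (Fin 3) K) = Q := rfl
    rw [hPUinv]
    show Matrix.diagonal ν = Q * M * P
    rw [Matrix.mul_assoc, hMP, ← Matrix.mul_assoc, hQP, Matrix.one_mul]
  have hordD : orderOf (π DU) = n := by
    have hval : π DU = (π PU)⁻¹ * π A * π PU := by
      rw [hDU, _root_.map_mul, _root_.map_mul, map_inv]
    have hcp : ∀ (x y : PGL3 K) (m : ℕ), (y⁻¹ * x * y) ^ m = y⁻¹ * x ^ m * y := by
      intro x y m
      induction m with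
      | zero => group
      | succ k ih =>
        rw [pow_succ, ih, pow_succ]
        group
    rw [← hord, orderOf_eq_orderOf_iff]
    intro m
    rw [hval, hcp]
    constructor
    · intro h1
      calc (π A) ^ m
          = (π PU) * ((π PU)⁻¹ * (π A) ^ m * (π PU)) * (π PU)⁻¹ := by group
        _ = (π PU) * 1 * (π PU)⁻¹ := by rw [h1]
        _ = 1 := by group
    · intro h1
      rw [h1]
      group
  -- translate powers of DU being central
  set w : Fin 3 → K := fun i => ν i / ν 0 with hw_def
  have hwn : ∀ i, w i ^ n = 1 := by
    intro i
    rw [hw_def]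
    simp only [div_pow]
    rw [hνn i, hνn 0, div_self hc0ne]
  have hcenD : ∀ m : ℕ, ((π DU) ^ m = 1 ↔ (w 1 ^ m = 1 ∧ w 2 ^ m = 1)) := by
    intro m
    have hval : ((DU ^ m : GL (Fin 3) K) : Matrix (Fin 3) (Fin 3) K)
        = Matrix.diagonal (fun i => ν i ^ m) := by
      rw [Units.val_pow_eq_pow_val]
      show (Matrix.diagonal ν) ^ m = _
      rw [Matrix.diagonal_pow]
      rfl
    constructor
    · intro h1
      rw [← map_pow] at h1
      have h2 : DU ^ m ∈ Subgroup.center (GL (Fin 3) K) := by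
        have h3 : DU ^ m ∈ MonoidHom.ker π := h1
        rwa [hπ, QuotientGroup.ker_mk'] at h3
      obtain ⟨c', hc'⟩ := mem_center_GL_iff.mp h2
      rw [hval, Matrix.scalar_apply] at hc'
      have h4 : ∀ i : Fin 3, ν i ^ m = c' := by
        intro i
        have h5 := congrFun (congrFun hc' i) i
        rwa [Matrix.diagonal_apply_eq, Matrix.diagonal_apply_eq] at h5
      constructor
      · rw [hw_def]
        simp only [div_pow]
        rw [h4 1, h4 0, div_self]
        rw [← h4 0]
        exact pow_ne_zero _ (hνne 0)
      · rw [hw_def]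
        simp only [div_pow]
        rw [h4 2, h4 0, div_self]
        rw [← h4 0]
        exact pow_ne_zero _ (hνne 0)
    · rintro ⟨h1, h2⟩
      rw [← map_pow]
      have h3 : DU ^ m ∈ Subgroup.center (GL (Fin 3) K) := by
        rw [mem_center_GL_iff]
        refine ⟨ν 0 ^ m, ?_⟩
        rw [hval, Matrix.scalar_apply]
        have hwi : ∀ i, w i ^ m = 1 → ν i ^ m = ν 0 ^ m := by
          intro i hw1
          rw [hw_def] at hw1
          simp only [div_pow] at hw1
          exact (div_eq_one_iff_eq (pow_ne_zero _ (hνne 0))).mp hw1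
        have hfun : (fun i => ν i ^ m) = fun _ : Fin 3 => ν 0 ^ m := by
          funext i
          fin_cases i
          · rfl
          · exact hwi 1 h1
          · exact hwi 2 h2
        rw [hfun]
      have h4 : DU ^ m ∈ MonoidHom.ker π := by
        rwa [hπ, QuotientGroup.ker_mk']
      exact h4
  have hiff : ∀ m : ℕ, (w 1 ^ m = 1 ∧ w 2 ^ m = 1) ↔ n ∣ m := by
    intro m
    rw [← hcenD m, ← hordD]
    exact (orderOf_dvd_iff_pow_eq_one).symm
  -- primitive root and exponents
  obtain ⟨ζ, hζ⟩ := HasEnoughRootsOfUnity.exists_primitiveRoot K n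
  obtain ⟨a, halt, ha⟩ := hζ.eq_pow_of_pow_eq_one (hwn 1)
  obtain ⟨b, hblt, hb⟩ := hζ.eq_pow_of_pow_eq_one (hwn 2)
  set e : Fin 3 → ℕ := ![0, a, b] with he_def
  have hwe : ∀ i, w i = ζ ^ e i := by
    intro i
    fin_cases i
    · show w 0 = ζ ^ (0:ℕ)
      rw [pow_zero, hw_def]
      exact div_self (hνne 0)
    · exact ha.symm
    · exact hb.symm
  -- the three support relations
  set G : MvPolynomial (Fin 3) K := substPoly P F with hG_def
  have hGhom : G.IsHomogeneous d := isHomogeneous_substPoly hhom P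
  have hGns : IsNonsingular G := isNonsingular_substPoly hns P Q hPQ hQP
  have hsubD : substPoly (Matrix.diagonal ν) G = (c : K) • G := by
    rw [hG_def, ← substPoly_mul, ← hMP, substPoly_mul, hc, substPoly_smul]
  have hrel : ∀ t : Fin 3, ∃ s : Fin 3, ν t ^ (d-1) * ν s = (c : K) := by
    intro t
    obtain ⟨s, hs⟩ := exists_support_mono (by omega) hGhom hGns t
    refine ⟨s, ?_⟩
    have h1 := coeff_substPoly_diagonal ν G (Finsupp.single t (d-1) + Finsupp.single s 1)
    rw [hsubD, MvPolynomial.coeff_smul, smul_eq_mul] at h1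
    have h2 : (∏ i, ν i ^ (Finsupp.single t (d-1) + Finsupp.single s 1 : Fin 3 →₀ ℕ) i)
        = ν t ^ (d-1) * ν s := by
      have h3 : ∀ i : Fin 3, ν i ^ (Finsupp.single t (d-1) + Finsupp.single s 1 : Fin 3 →₀ ℕ) i
          = ν i ^ (Finsupp.single t (d-1) : Fin 3 →₀ ℕ) i
            * ν i ^ (Finsupp.single s 1 : Fin 3 →₀ ℕ) i := by
        intro i
        rw [Finsupp.add_apply, pow_add]
      rw [Finset.prod_congr rfl (fun i _ => h3 i), Finset.prod_mul_distrib,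
        prod_pow_single, prod_pow_single, pow_one]
    rw [h2] at h1
    exact mul_right_cancel₀ hs h1.symm
  -- normalize by ν 0
  have hν0d : ν 0 ^ (d-1) * ν 0 = ν 0 ^ d := by
    rw [← pow_succ]
    congr 1
    omega
  set lam : K := (c : K) / ν 0 ^ d with hlam_def
  have hwrel : ∀ t : Fin 3, ∃ s : Fin 3, w t ^ (d-1) * w s = lam := by
    intro t
    obtain ⟨s, hs⟩ := hrel t
    refine ⟨s, ?_⟩
    rw [hw_def, hlam_def]
    simp only [div_pow]
    rw [div_mul_div_comm, hs, hν0d]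
  obtain ⟨s0, hs0⟩ := hwrel 0
  have hlamn : lam ^ n = 1 := by
    have hx1 : (w 0 ^ (d-1)) ^ n = 1 := by
      rw [← pow_mul, mul_comm, pow_mul, hwn 0, one_pow]
    rw [← hs0, mul_pow, hx1, one_mul, hwn s0]
  obtain ⟨L, hLlt, hL⟩ := hζ.eq_pow_of_pow_eq_one hlamn
  -- congruences
  have hcong : ∀ t : Fin 3, ∃ s : Fin 3,
      (n : ℤ) ∣ ((e t * (d-1) + e s : ℕ) : ℤ) - (L : ℤ) := by
    intro t
    obtain ⟨s, hs⟩ := hwrel t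
    refine ⟨s, ?_⟩
    apply prim_dvd_sub hn0 hζ
    rw [pow_add, pow_mul, ← hwe t, ← hwe s, hs, hL]
  -- gcd is 1
  have hgcd : Nat.gcd a (Nat.gcd b n) = 1 := by
    set t := Nat.gcd a (Nat.gcd b n) with ht_def
    have hta : t ∣ a := Nat.gcd_dvd_left _ _
    have htb : t ∣ b := (Nat.gcd_dvd_right a _).trans (Nat.gcd_dvd_left b n)
    have htn : t ∣ n := (Nat.gcd_dvd_right a _).trans (Nat.gcd_dvd_right b n)
    have ht0 : t ≠ 0 := by
      intro h0
      rw [h0] at htn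
      exact hn0 (Nat.eq_zero_of_zero_dvd htn)
    have hdvda : n ∣ a * (n / t) := by
      obtain ⟨a', ha'⟩ := hta
      refine ⟨a', ?_⟩
      rw [ha', mul_comm t a', mul_assoc, Nat.mul_div_cancel' htn, mul_comm]
    have hdvdb : n ∣ b * (n / t) := by
      obtain ⟨b', hb'⟩ := htb
      refine ⟨b', ?_⟩
      rw [hb', mul_comm t b', mul_assoc, Nat.mul_div_cancel' htn, mul_comm]
    have hm : n ∣ n / t := by
      rw [← hiff (n / t)]
      constructor
      · rw [← ha, ← pow_mul, hζ.pow_eq_one_iff_dvd]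
        exact hdvda
      · rw [← hb, ← pow_mul, hζ.pow_eq_one_iff_dvd]
        exact hdvdb
    have hle : n / t ≤ n := Nat.div_le_self _ _
    have hpos : 0 < n / t := Nat.div_pos (Nat.le_of_dvd (Nat.pos_of_ne_zero hn0) htn)
      (Nat.pos_of_ne_zero ht0)
    have heq : n / t = n := Nat.le_antisymm hle (Nat.le_of_dvd hpos hm)
    have h1 : t * (n / t) = n := Nat.mul_div_cancel' htn
    rw [heq] at h1
    have h2 : t * n = 1 * n := by rw [one_mul, h1]
    exact Nat.eq_of_mul_eq_mul_right (Nat.pos_of_ne_zero hn0) h2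
  -- Bezout
  have hBez : ∃ x y z : ℤ, x * (a:ℤ) + y * (b:ℤ) + z * ((ℓ:ℤ) * (d:ℤ)) = 1 := by
    set g2 := Nat.gcd b n with hg2
    have e1 : (g2 : ℤ) = b * Nat.gcdA b n + n * Nat.gcdB b n := Nat.gcd_eq_gcd_ab b n
    have e2 : ((Nat.gcd a g2 : ℕ) : ℤ) = a * Nat.gcdA a g2 + g2 * Nat.gcdB a g2 :=
      Nat.gcd_eq_gcd_ab a g2
    rw [hgcd] at e2
    refine ⟨Nat.gcdA a g2, Nat.gcdA b n * Nat.gcdB a g2,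
      Nat.gcdB b n * Nat.gcdB a g2, ?_⟩
    have hnZ : ((n : ℕ) : ℤ) = (ℓ : ℤ) * (d : ℤ) := by
      rw [hn_def]
      push_cast
      ring
    rw [← hnZ]
    push_cast at e1 e2 ⊢
    linear_combination -e2 - (Nat.gcdB a g2 : ℤ) * e1
  -- build hypotheses of coreZ
  have hdz : ((d : ℤ)) ≥ 5 := by exact_mod_cast hd
  have hlz : ((ℓ : ℤ)) ≥ 2 := by exact_mod_cast hℓ1
  have hcast : ∀ (t s : Fin 3), ((e t * (d-1) + e s : ℕ) : ℤ) - (L : ℤ)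
      = ((d:ℤ)-1) * (e t : ℤ) + (e s : ℤ) - (L : ℤ) := by
    intro t s
    have : ((d - 1 : ℕ) : ℤ) = (d : ℤ) - 1 := by omega
    push_cast [this]
    ring
  have hnd : ((n : ℕ) : ℤ) = (ℓ:ℤ) * (d:ℤ) := by
    rw [hn_def]; push_cast; ring
  have hcong' : ∀ t : Fin 3, ∃ s : Fin 3,
      (ℓ:ℤ) * (d:ℤ) ∣ ((d:ℤ)-1) * (e t : ℤ) + (e s : ℤ) - (L : ℤ) := by
    intro t
    obtain ⟨s, hs⟩ := hcong t
    refine ⟨s, ?_⟩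
    rw [← hnd, ← hcast t s]
    exact hs
  have hmem : ∀ s : Fin 3, ((e s : ℤ) = 0 ∨ (e s : ℤ) = (a:ℤ) ∨ (e s : ℤ) = (b:ℤ)) := by
    intro s
    fin_cases s
    · left; rfl
    · right; left; rfl
    · right; right; rfl
  have h0core : (ℓ:ℤ) * (d:ℤ) ∣ 0 - (L:ℤ) ∨ (ℓ:ℤ) * (d:ℤ) ∣ (a:ℤ) - (L:ℤ)
      ∨ (ℓ:ℤ) * (d:ℤ) ∣ (b:ℤ) - (L:ℤ) := by
    obtain ⟨s, hs⟩ := hcong' 0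
    have he0 : (e 0 : ℤ) = 0 := rfl
    rw [he0, mul_zero, zero_add] at hs
    rcases hmem s with h1 | h1 | h1 <;> rw [h1] at hs
    · left
      exact hs
    · right; left; exact hs
    · right; right; exact hs
  have h1core : ∃ E : ℤ, (E = 0 ∨ E = (a:ℤ) ∨ E = (b:ℤ))
      ∧ (ℓ:ℤ) * (d:ℤ) ∣ ((d:ℤ)-1) * (a:ℤ) + E - (L:ℤ) := by
    obtain ⟨s, hs⟩ := hcong' 1
    have he1 : (e 1 : ℤ) = (a:ℤ) := rfl
    rw [he1] at hs
    exact ⟨(e s : ℤ), hmem s, hs⟩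
  have h2core : ∃ E : ℤ, (E = 0 ∨ E = (a:ℤ) ∨ E = (b:ℤ))
      ∧ (ℓ:ℤ) * (d:ℤ) ∣ ((d:ℤ)-1) * (b:ℤ) + E - (L:ℤ) := by
    obtain ⟨s, hs⟩ := hcong' 2
    have he2 : (e 2 : ℤ) = (b:ℤ) := rfl
    rw [he2] at hs
    exact ⟨(e s : ℤ), hmem s, hs⟩
  have hfinal := coreZ (d:ℤ) (ℓ:ℤ) hdz hlz (a:ℤ) (b:ℤ) (L:ℤ) hBez h0core h1core h2core
  rcases hfinal with h1 | h1
  · left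
    have h2 : ((ℓ:ℤ)) ∣ ((d - 1 : ℕ) : ℤ) := by
      rwa [show ((d - 1 : ℕ) : ℤ) = (d:ℤ) - 1 by omega]
    exact_mod_cast h2
  · right
    have h2 : ((ℓ:ℤ)) ∣ ((d - 2 : ℕ) : ℤ) := by
      rwa [show ((d - 2 : ℕ) : ℤ) = (d:ℤ) - 2 by omega]
    exact_mod_cast h2

end
end

section
/- Let K be an algebraically closed field of characteristic 0, let d ≥ 5 be an odd integer, and let β ∈ K^× be such that F = X^d + Y^d + Z^{d−1}·X + β·X^{d−2}·Y² is nonsingular. Then Aut(F) is the cyclic group of order d−1 generated by the class of the diagonal matrix diag(1,1,ζ_{d−1}), where ζ_{d−1} ∈ K is a primitive (d−1)-th root of unity. -/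
open MvPolynomial Matrix

noncomputable section

variable {K : Type*} [Field K]

lemma eval_substPoly_s13 (M : Matrix (Fin 3) (Fin 3) K) (G : MvPolynomial (Fin 3) K)
    (v : Fin 3 → K) : eval v (substPoly M G) = eval (M.mulVec v) G := by
  have h : (MvPolynomial.eval v).comp ((aeval (fun i => ∑ j, M i j • X j) :
      MvPolynomial (Fin 3) K →ₐ[K] MvPolynomial (Fin 3) K) : MvPolynomial (Fin 3) K →+* _)
      = (MvPolynomial.eval (M.mulVec v) : MvPolynomial (Fin 3) K →+* K) := by
    apply MvPolynomial.ringHom_ext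
    · intro a; simp
    · intro i
      simp [Matrix.mulVec, dotProduct, mul_comm]
  exact congrFun (congrArg (fun f => DFunLike.coe f) h) G

lemma coeff_CXC_pow (A B : K) (n k : ℕ) :
    ((Polynomial.C A * Polynomial.X + Polynomial.C B : Polynomial K) ^ n).coeff k
      = if k ≤ n then (n.choose k : K) * A ^ k * B ^ (n - k) else 0 := by
  rw [add_pow, Polynomial.finset_sum_coeff]
  have : ∀ j ∈ Finset.range (n+1),
      ((Polynomial.C A * Polynomial.X) ^ j * Polynomial.C B ^ (n - j) * (n.choose j : Polynomial K)).coeff k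
      = if j = k then (n.choose k : K) * A ^ k * B ^ (n - k) else 0 := by
    intro j hj
    have h1 : (Polynomial.C A * Polynomial.X) ^ j * Polynomial.C B ^ (n - j) * (n.choose j : Polynomial K)
        = Polynomial.C (A ^ j * B ^ (n-j) * (n.choose j : K)) * Polynomial.X ^ j := by
      rw [mul_pow, ← Polynomial.C_pow, ← Polynomial.C_pow, ← Polynomial.C_eq_natCast,
        Polynomial.C_mul, Polynomial.C_mul]
      ring
    rw [h1, Polynomial.coeff_C_mul, Polynomial.coeff_X_pow]
    by_cases hkj : k = j
    · subst hkj; rw [if_pos rfl, if_pos rfl, mul_one]; ring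
    · rw [if_neg hkj, if_neg (Ne.symm hkj), mul_zero]
  rw [Finset.sum_congr rfl this, Finset.sum_ite_eq' (Finset.range (n+1))]
  simp only [Finset.mem_range]
  split
  · rename_i h; rw [if_pos (by omega)]
  · rename_i h; rw [if_neg (by omega)]

lemma two_pow_gt {d : ℕ} (hd : 5 ≤ d) : d - 1 < 2 ^ (d - 2) := by
  induction d with
  | zero => omega
  | succ n ih =>
      rcases Nat.lt_or_ge n 5 with h | h
      · interval_cases n <;> simp_all
      · have := ih (by omega)
        have h2 : n + 1 - 2 = (n-2) + 1 := by omega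
        rw [h2, pow_succ]
        omega


lemma pderiv_substPoly (M : Matrix (Fin 3) (Fin 3) K) (G : MvPolynomial (Fin 3) K)
    (j : Fin 3) :
    pderiv j (substPoly M G) = ∑ i, M i j • substPoly M (pderiv i G) := by
  unfold substPoly
  set g : Fin 3 → MvPolynomial (Fin 3) K := fun i => ∑ j, M i j • X j with hgdef
  have hg : ∀ k, pderiv j (g k) = C (M k j) := by
    intro k
    simp [hgdef, pderiv_X, Pi.single_apply, Finset.sum_ite_eq', smul_eq_C_mul]
  induction G using MvPolynomial.induction_on with
  | C a => simp
  | add p q hp hq =>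
      simp only [map_add, hp, hq, ← Finset.sum_add_distrib, smul_add]
  | mul_X p k hp =>
      rw [_root_.map_mul, aeval_X, pderiv_mul, hp, hg]
      have h2 : ∀ i : Fin 3, (pderiv i) (p * X k)
          = pderiv i p * X k + if k = i then p else 0 := by
        intro i; rw [pderiv_mul, pderiv_X, Pi.single_apply]; simp [mul_ite]
      simp only [h2, map_add, _root_.map_mul, aeval_X, smul_add, apply_ite (aeval g),
        map_zero, smul_ite, smul_zero, Finset.sum_add_distrib,
        Finset.sum_ite_eq, Finset.mem_univ, if_true]
      rw [Finset.sum_mul]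
      simp only [smul_mul_assoc]
      congr 1
      rw [Algebra.smul_def, algebraMap_eq]
      ring


def Fp (d : ℕ) (β : K) : MvPolynomial (Fin 3) K :=
  X 0 ^ d + X 1 ^ d + X 2 ^ (d-1) * X 0 + C β * X 0 ^ (d-2) * X 1 ^ 2

lemma evalFp (d : ℕ) (β : K) (v : Fin 3 → K) :
    eval v (Fp d β) = v 0 ^ d + v 1 ^ d + v 2 ^ (d-1) * v 0 + β * v 0 ^ (d-2) * v 1 ^ 2 := by
  simp [Fp]

lemma evalPd0 (d : ℕ) (β : K) (v : Fin 3 → K) :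
    eval v (pderiv 0 (Fp d β))
      = (d : K) * v 0 ^ (d-1) + v 2 ^ (d-1) + ((d-2 : ℕ) : K) * β * v 0 ^ (d-3) * v 1 ^ 2 := by
  simp [Fp, pderiv_mul, pderiv_pow, pderiv_X, Pi.single_apply]
  rw [show d-2-1 = d-3 from by omega]
  ring_nf

lemma evalPd1 (d : ℕ) (β : K) (v : Fin 3 → K) :
    eval v (pderiv 1 (Fp d β))
      = (d : K) * v 1 ^ (d-1) + 2 * β * v 0 ^ (d-2) * v 1 := by
  simp [Fp, pderiv_mul, pderiv_pow, pderiv_X, Pi.single_apply]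
  ring_nf

lemma evalPd2 (d : ℕ) (β : K) (v : Fin 3 → K) :
    eval v (pderiv 2 (Fp d β))
      = ((d-1 : ℕ) : K) * v 2 ^ (d-2) * v 0 := by
  simp [Fp, pderiv_mul, pderiv_pow, pderiv_X, Pi.single_apply]
  rw [show d-1-1 = d-2 from by omega]
  ring_nf


def TT (F : MvPolynomial (Fin 3) K) (p : Fin 3 → K) : Prop :=
  eval p F = 0 ∧ ∀ q : Fin 3 → K,
    (∑ i, q i * eval p (pderiv i F)) = 0 → eval q F = 0 → ∃ t : K, q = t • p



lemma TT_unique [IsAlgClosed K] [CharZero K] (d : ℕ) (hd : 5 ≤ d) (β : K) (hβ : β ≠ 0)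
    (p : Fin 3 → K) (h : TT (Fp d β) p) : p 0 = 0 ∧ p 1 = 0 := by
  obtain ⟨hF0, hTT⟩ := h
  set φ0 := eval p (pderiv 0 (Fp d β)) with hφ0
  set φ1 := eval p (pderiv 1 (Fp d β)) with hφ1
  set φ2 := eval p (pderiv 2 (Fp d β)) with hφ2
  have hsum : ∀ q : Fin 3 → K, (∑ i, q i * eval p (pderiv i (Fp d β)))
      = q 0 * φ0 + q 1 * φ1 + q 2 * φ2 := by
    intro q; rw [Fin.sum_univ_three]
  have hd0 : d ≠ 0 := by omega
  by_cases h2 : φ2 = 0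
  · -- easy case: (0,0,1) on tangent line
    obtain ⟨t, ht⟩ := hTT ![0,0,1]
      (by rw [hsum]; simp [h2])
      (by rw [evalFp]; simp [hd0])
    have ht0 := congrFun ht 0
    have ht1 := congrFun ht 1
    have ht2 := congrFun ht 2
    simp only [Matrix.cons_val_zero, Matrix.cons_val_one, Matrix.head_cons,
      Matrix.cons_val_two, Matrix.tail_cons, Pi.smul_apply, smul_eq_mul] at ht0 ht1 ht2
    have htne : t ≠ 0 := by rintro rfl; rw [zero_mul] at ht2; exact one_ne_zero ht2
    constructor
    · exact (mul_eq_zero.mp ht0.symm).resolve_left htne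
    · exact (mul_eq_zero.mp ht1.symm).resolve_left htne
  · -- hard case
    exfalso
    set α := -φ0 / φ2 with hα
    set γ := -φ1 / φ2 with hγ
    have hαe : φ0 + α * φ2 = 0 := by rw [hα, div_mul_cancel₀ _ h2]; ring
    have hγe : φ1 + γ * φ2 = 0 := by rw [hγ, div_mul_cancel₀ _ h2]; ring
    -- any point (s, t, αs+γt) is on the tangent line
    have htang : ∀ s t : K, (∑ i, (![s, t, α*s+γ*t]) i * eval p (pderiv i (Fp d β))) = 0 := by
      intro s t
      rw [hsum]
      simp only [Matrix.cons_val_zero, Matrix.cons_val_one, Matrix.head_cons,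
        Matrix.cons_val_two, Matrix.tail_cons]
      have : s * φ0 + t * φ1 + (α*s+γ*t) * φ2
          = s * (φ0 + α * φ2) + t * (φ1 + γ * φ2) := by ring
      rw [this, hαe, hγe]; ring
    clear_value α γ
    -- the dehomogenized restriction to the tangent line
    set Q : Polynomial K := Polynomial.X^d + Polynomial.C 1
        + Polynomial.X * (Polynomial.C α * Polynomial.X + Polynomial.C γ)^(d-1)
        + Polynomial.C β * Polynomial.X^(d-2) with hQ
    have hQeval : ∀ s : K, Q.eval s = eval ![s, 1, α*s+γ] (Fp d β) := by
      intro s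
      rw [evalFp, hQ]
      simp only [Polynomial.eval_add, Polynomial.eval_mul, Polynomial.eval_pow,
        Polynomial.eval_X, Polynomial.eval_C, Matrix.cons_val_zero, Matrix.cons_val_one,
        Matrix.head_cons, Matrix.cons_val_two, Matrix.tail_cons]
      ring
    -- roots of Q give points proportional to p
    have hprop : ∀ s : K, Q.eval s = 0 → ∃ t : K, t ≠ 0 ∧ t * p 0 = s ∧ t * p 1 = 1 := by
      intro s hs
      have htang1 := htang s 1
      rw [mul_one] at htang1
      obtain ⟨t, ht⟩ := hTT ![s, 1, α*s+γ] htang1 (by rw [← hQeval]; exact hs)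
      have ht0 := congrFun ht 0
      have ht1 := congrFun ht 1
      simp only [Matrix.cons_val_zero, Matrix.cons_val_one, Matrix.head_cons,
        Pi.smul_apply, smul_eq_mul] at ht0 ht1
      refine ⟨t, ?_, ht0.symm, ht1.symm⟩
      rintro rfl
      rw [zero_mul] at ht1
      exact one_ne_zero ht1
    have hroots : ∀ s s' : K, Q.eval s = 0 → Q.eval s' = 0 → s = s' := by
      intro s s' hs hs'
      obtain ⟨t, htne, ht0, ht1⟩ := hprop s hs
      obtain ⟨t', htne', ht0', ht1'⟩ := hprop s' hs'
      have hp1 : p 1 ≠ 0 := by rintro hp; rw [hp, mul_zero] at ht1; exact one_ne_zero ht1.symm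
      have : t = t' := by
        have := ht1.trans ht1'.symm
        exact mul_right_cancel₀ hp1 this
      rw [← ht0, ← ht0', this]
    -- coefficients of Q
    have hQc : ∀ k, Q.coeff k = (if k = d then (1:K) else 0) + (if k = 0 then 1 else 0)
        + (if 1 ≤ k ∧ k ≤ d then (((d-1).choose (k-1) : ℕ) : K) * α^(k-1) * γ^(d-k) else 0)
        + (if k = d-2 then β else 0) := by
      intro k
      rw [hQ]
      simp only [Polynomial.coeff_add]
      have e1 : (Polynomial.X ^ d : Polynomial K).coeff k = if k = d then (1:K) else 0 :=
        Polynomial.coeff_X_pow d k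
      have e2 : (Polynomial.C (1:K)).coeff k = if k = 0 then (1:K) else 0 := by
        rw [Polynomial.C_1, Polynomial.coeff_one]
      have e4 : (Polynomial.C β * Polynomial.X ^ (d-2)).coeff k
          = if k = d-2 then β else 0 := by
        rw [Polynomial.coeff_C_mul, Polynomial.coeff_X_pow, mul_ite, mul_one, mul_zero]
      have e3 : (Polynomial.X * (Polynomial.C α * Polynomial.X + Polynomial.C γ)^(d-1)).coeff k
          = if 1 ≤ k ∧ k ≤ d then (((d-1).choose (k-1) : ℕ) : K) * α^(k-1) * γ^(d-k) else 0 := by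
        cases k with
        | zero =>
            rw [Polynomial.mul_coeff_zero, Polynomial.coeff_X_zero, zero_mul]
            rw [if_neg (by omega)]
        | succ n =>
            rw [Polynomial.coeff_X_mul, coeff_CXC_pow]
            by_cases hn : n ≤ d - 1
            · rw [if_pos hn, if_pos (by omega)]
              have : d - 1 - n = d - (n+1) := by omega
              rw [this]
              norm_num
            · rw [if_neg hn, if_neg (by omega)]
      rw [e1, e2, e3, e4]
    have c0 : Q.coeff 0 = 1 := by
      rw [hQc]
      rw [if_neg (by omega), if_pos rfl, if_neg (by omega), if_neg (by omega)]
      ring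
    have c1 : Q.coeff 1 = γ^(d-1) := by
      rw [hQc]
      rw [if_neg (by omega), if_neg (by omega), if_pos (by omega), if_neg (by omega)]
      rw [show (1:ℕ)-1 = 0 from rfl, Nat.choose_zero_right, pow_zero, Nat.cast_one]
      ring
    have c2 : Q.coeff 2 = ((d-1 : ℕ) : K) * α * γ^(d-2) := by
      rw [hQc]
      rw [if_neg (by omega), if_neg (by omega), if_pos (by omega), if_neg (by omega)]
      rw [show (2:ℕ)-1 = 1 from rfl, Nat.choose_one_right, pow_one]
      ring
    have cd1 : Q.coeff (d-1) = ((d-1 : ℕ) : K) * α^(d-2) * γ := by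
      rw [hQc]
      rw [if_neg (by omega), if_neg (by omega), if_pos (by omega), if_neg (by omega)]
      have h1 : (d-1).choose (d-1-1) = d - 1 := by
        have := Nat.choose_symm (by omega : 1 ≤ d - 1)
        rw [show d-1-1 = (d-1)-1 from rfl]
        rw [this, Nat.choose_one_right]
      rw [h1, show d - (d-1) = 1 from by omega, pow_one, show d-1-1 = d-2 from by omega]
      ring
    have cd : Q.coeff d = 1 + α^(d-1) := by
      rw [hQc]
      rw [if_pos rfl, if_neg (by omega), if_pos (by omega), if_neg (by omega)]
      rw [Nat.choose_self, show d - d = 0 from by omega, pow_zero, Nat.cast_one]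
      ring
    have cd2 : Q.coeff (d-2) = β + (((d-1).choose (d-3) : ℕ) : K) * α^(d-3) * γ^2 := by
      rw [hQc]
      rw [if_neg (by omega), if_neg (by omega), if_pos (by omega), if_pos rfl]
      rw [show d-2-1 = d-3 from by omega, show d-(d-2) = 2 from by omega]
      ring
    have chigh : ∀ k, d < k → Q.coeff k = 0 := by
      intro k hk
      rw [hQc]
      rw [if_neg (by omega), if_neg (by omega), if_neg (by omega), if_neg (by omega)]
      ring
    set L := 1 + α^(d-1) with hL
    by_cases hL0 : L = 0
    · -- point at infinity on the curve: p 1 = 0, but Q still has a root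
      have htang' := htang 1 0
      rw [mul_one, mul_zero, add_zero] at htang'
      obtain ⟨t, ht⟩ := hTT ![1, 0, α] htang'
        (by rw [evalFp]; simp [hd0]; rw [show (1:K) + α^(d-1) = L from rfl, hL0])
      have ht0 := congrFun ht 0
      have ht1 := congrFun ht 1
      simp only [Matrix.cons_val_zero, Matrix.cons_val_one, Matrix.head_cons,
        Pi.smul_apply, smul_eq_mul] at ht0 ht1
      have htne : t ≠ 0 := by rintro rfl; rw [zero_mul] at ht0; exact one_ne_zero ht0
      have hp1 : p 1 = 0 := by
        rcases mul_eq_zero.mp ht1.symm with h | h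
        · exact absurd h htne
        · exact h
      -- Q is nonconstant hence has a root
      have hroot : ∃ s, Q.eval s = 0 := by
        have hcne : ∃ k, 1 ≤ k ∧ Q.coeff k ≠ 0 := by
          by_cases hγ0 : γ = 0
          · refine ⟨d-2, by omega, ?_⟩
            rw [cd2, hγ0]
            simpa using hβ
          · exact ⟨1, le_refl 1, by rw [c1]; exact pow_ne_zero _ hγ0⟩
        obtain ⟨k, hk1, hkne⟩ := hcne
        have hQne : Q ≠ 0 := fun hh => hkne (by rw [hh]; simp)
        have hdegpos : 0 < Q.natDegree :=
          lt_of_lt_of_le hk1 (Polynomial.le_natDegree_of_ne_zero hkne)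
        have : Q.degree ≠ 0 := by
          rw [Polynomial.degree_eq_natDegree hQne]
          exact_mod_cast (by omega : Q.natDegree ≠ 0)
        obtain ⟨s, hs⟩ := IsAlgClosed.exists_root Q this
        exact ⟨s, hs⟩
      obtain ⟨s, hs⟩ := hroot
      obtain ⟨t', ht'ne, ht'0, ht'1⟩ := hprop s hs
      rw [hp1, mul_zero] at ht'1
      exact one_ne_zero ht'1.symm
    · -- the total-contact case: Q = C L * (X - C s₀)^d, leading to a numerical contradiction
      have hQne : Q ≠ 0 := fun hh => hL0 (by rw [← cd, hh]; simp)
      have hdeg : Q.natDegree = d := by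
        apply le_antisymm
        · exact Polynomial.natDegree_le_iff_coeff_eq_zero.mpr (fun m hm => chigh m hm)
        · exact Polynomial.le_natDegree_of_ne_zero (by rw [cd]; exact hL0)
      have hsplits := IsAlgClosed.splits Q
      have hcard : Multiset.card Q.roots = d := by
        rw [Polynomial.splits_iff_card_roots.mp hsplits, hdeg]
      have hex : ∃ s₀, s₀ ∈ Q.roots := by
        apply Multiset.exists_mem_of_ne_zero
        intro hh
        rw [hh] at hcard
        simp at hcard
        omega
      obtain ⟨s₀, hs₀mem⟩ := hex
      have hs₀ : Q.eval s₀ = 0 := Polynomial.mem_roots'.mp hs₀mem |>.2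
      have hrepl : Q.roots = Multiset.replicate d s₀ := by
        rw [Multiset.eq_replicate]
        refine ⟨hcard, fun b hb => ?_⟩
        exact hroots b s₀ (Polynomial.mem_roots'.mp hb |>.2) hs₀
      have hfact : Q = Polynomial.C L * (Polynomial.X - Polynomial.C s₀)^d := by
        have hh := hsplits.eq_prod_roots
        rw [hrepl, Multiset.map_replicate, Multiset.prod_replicate] at hh
        rw [hh, Polynomial.leadingCoeff, hdeg, cd]
      set σ := -s₀ with hσdef
      have hXC : Polynomial.X - Polynomial.C s₀
          = Polynomial.C (1:K) * Polynomial.X + Polynomial.C σ := by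
        rw [hσdef, Polynomial.C_neg, Polynomial.C_1]
        ring
      clear_value σ
      have coeffQ : ∀ k, k ≤ d → Q.coeff k = L * ((d.choose k : ℕ) : K) * σ^(d-k) := by
        intro k hk
        rw [hfact, hXC, Polynomial.coeff_C_mul, coeff_CXC_pow, if_pos hk, one_pow]
        ring
      have E0 : L * σ^d = 1 := by
        have h := (coeffQ 0 (by omega)).symm.trans c0
        rw [Nat.choose_zero_right, Nat.sub_zero, Nat.cast_one, mul_one] at h
        exact h
      have E1 : L * (d : K) * σ^(d-1) = γ^(d-1) := by
        have := (coeffQ 1 (by omega)).symm.trans c1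
        rw [Nat.choose_one_right] at this
        exact this
      have E2 : L * ((d.choose 2 : ℕ) : K) * σ^(d-2) = ((d-1 : ℕ) : K) * α * γ^(d-2) := by
        exact (coeffQ 2 (by omega)).symm.trans c2
      have E3 : L * (d : K) * σ = ((d-1 : ℕ) : K) * α^(d-2) * γ := by
        have := (coeffQ (d-1) (by omega)).symm.trans cd1
        have hch : d.choose (d-1) = d := by
          rw [Nat.choose_symm (by omega : 1 ≤ d), Nat.choose_one_right]
        rw [hch, show d - (d-1) = 1 from by omega, pow_one] at this
        exact this
      have hdK : (d : K) ≠ 0 := Nat.cast_ne_zero.mpr hd0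
      have hσne : σ ≠ 0 := by
        rintro rfl
        rw [zero_pow hd0, mul_zero] at E0
        exact one_ne_zero E0.symm
      have hD1 : ((d-1 : ℕ) : K) ≠ 0 := Nat.cast_ne_zero.mpr (by omega)
      have A2 : γ^(d-1) * σ = (d : K) := by
        calc γ^(d-1) * σ = L * (d:K) * σ^(d-1) * σ := by rw [E1]
          _ = (d:K) * (L * (σ^(d-1) * σ)) := by ring
          _ = (d:K) * (L * σ^d) := by
              rw [← pow_succ]
              exact congrArg (fun n => (d:K) * (L * σ^n)) (by omega : d-1+1 = d)
          _ = (d:K) := by rw [E0, mul_one]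
      have hch2 : 2 * d.choose 2 = d * (d-1) := by
        rw [Nat.choose_two_right]
        obtain ⟨c, hc⟩ := Nat.even_mul_succ_self (d-1)
        have h1 : d * (d-1) = (d-1) * ((d-1)+1) := by
          rw [show (d-1)+1 = d from by omega]; ring
        omega
      have A3 : 2 * α * γ^(d-2) * σ^2 = (d : K) := by
        have step : ((d-1 : ℕ) : K) * (2 * α * γ^(d-2) * σ^2)
            = ((d-1 : ℕ) : K) * (d : K) := by
          calc ((d-1 : ℕ) : K) * (2 * α * γ^(d-2) * σ^2)
              = 2 * (((d-1 : ℕ) : K) * α * γ^(d-2)) * σ^2 := by ring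
            _ = 2 * (L * ((d.choose 2 : ℕ) : K) * σ^(d-2)) * σ^2 := by rw [E2]
            _ = 2 * ((d.choose 2 : ℕ) : K) * (L * (σ^(d-2) * σ^2)) := by ring
            _ = 2 * ((d.choose 2 : ℕ) : K) * (L * σ^d) := by
                rw [← pow_add]
                exact congrArg (fun n => 2 * ((d.choose 2 : ℕ) : K) * (L * σ^n))
                  (by omega : d-2+2 = d)
            _ = ((2 * d.choose 2 : ℕ) : K) := by rw [E0, mul_one]; push_cast; ring
            _ = ((d * (d-1) : ℕ) : K) := by rw [hch2]
            _ = ((d-1 : ℕ) : K) * (d : K) := by push_cast; ring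
        exact mul_left_cancel₀ hD1 step
      have A4 : ((d-1 : ℕ) : K) * (α^(d-2) * γ * σ^(d-1)) = (d : K) := by
        calc ((d-1 : ℕ) : K) * (α^(d-2) * γ * σ^(d-1))
            = (((d-1 : ℕ) : K) * α^(d-2) * γ) * σ^(d-1) := by ring
          _ = (L * (d:K) * σ) * σ^(d-1) := by rw [E3]
          _ = (d:K) * (L * (σ * σ^(d-1))) := by ring
          _ = (d:K) * (L * σ^d) := by
              rw [← pow_succ']
              exact congrArg (fun n => (d:K) * (L * σ^n)) (by omega : (d-1)+1 = d)
          _ = (d:K) := by rw [E0, mul_one]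
      set T := α^(d-2) * γ^((d-2)*(d-2)) * σ^(2*(d-2)) with hT
      have P1 : 2^(d-2) * T = (d : K)^(d-2) := by
        have h := congrArg (fun x : K => x ^ (d-2)) A3
        rw [← h, hT, mul_pow, mul_pow, mul_pow, ← pow_mul, ← pow_mul]
        ring
      have P2 : ((d-1 : ℕ) : K) * T = (d : K)^(d-2) := by
        have step := congrArg (· * (γ^((d-1)*(d-3)) * σ^(d-3))) A4
        have expγ : (d-1)*(d-3) + 1 = (d-2)*(d-2) := by
          obtain ⟨m, rfl⟩ : ∃ m, d = m + 5 := ⟨d - 5, by omega⟩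
          rw [show m+5-1 = m+4 from by omega, show m+5-3 = m+2 from by omega,
            show m+5-2 = m+3 from by omega]
          ring
        have lhs_eq : ((d-1 : ℕ) : K) * (α^(d-2) * γ * σ^(d-1)) * (γ^((d-1)*(d-3)) * σ^(d-3))
            = ((d-1 : ℕ) : K) * T := by
          rw [hT]
          have e1 : γ * γ^((d-1)*(d-3)) = γ^((d-2)*(d-2)) := by
            rw [← pow_succ']
            exact congrArg (fun n => γ ^ n) expγ
          have e2 : σ^(d-1) * σ^(d-3) = σ^(2*(d-2)) := by
            rw [← pow_add]
            exact congrArg (fun n => σ ^ n) (by omega : d-1+(d-3) = 2*(d-2))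
          calc ((d-1 : ℕ) : K) * (α^(d-2) * γ * σ^(d-1)) * (γ^((d-1)*(d-3)) * σ^(d-3))
              = ((d-1 : ℕ) : K) * (α^(d-2) * ((γ * γ^((d-1)*(d-3))) * (σ^(d-1) * σ^(d-3)))) := by
                ring
            _ = ((d-1 : ℕ) : K) * (α^(d-2) * (γ^((d-2)*(d-2)) * σ^(2*(d-2)))) := by rw [e1, e2]
            _ = ((d-1 : ℕ) : K) * T := by rw [hT]; ring
        have rhs_eq : (d : K) * (γ^((d-1)*(d-3)) * σ^(d-3)) = (d : K)^(d-2) := by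
          have e3 : γ^((d-1)*(d-3)) * σ^(d-3) = (γ^(d-1) * σ)^(d-3) := by
            rw [mul_pow, pow_mul]
          rw [e3, A2, ← pow_succ']
          exact congrArg (fun n => (d:K) ^ n) (by omega : (d-3)+1 = d-2)
        rw [lhs_eq, rhs_eq] at step
        exact step
      have hTne : T ≠ 0 := by
        intro hh
        rw [hh, mul_zero] at P1
        exact (pow_ne_zero (d-2) hdK) P1.symm
      have key : (2:K)^(d-2) = ((d-1 : ℕ) : K) := by
        have := P1.trans P2.symm
        exact mul_right_cancel₀ hTne this
      have keyN : (2^(d-2) : ℕ) = d - 1 := by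
        have : ((2^(d-2) : ℕ) : K) = ((d-1 : ℕ) : K) := by push_cast; exact key
        exact_mod_cast this
      have := two_pow_gt hd
      omega


lemma TT_transport (F : MvPolynomial (Fin 3) K) (B : GL (Fin 3) K) (c : K) (hc : c ≠ 0)
    (hB : substPoly (B : Matrix (Fin 3) (Fin 3) K) F = c • F) (p : Fin 3 → K)
    (h : TT F p) : TT F ((B : Matrix (Fin 3) (Fin 3) K).mulVec p) := by
  obtain ⟨hF0, hTT⟩ := h
  set M : Matrix (Fin 3) (Fin 3) K := (B : Matrix (Fin 3) (Fin 3) K) with hM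
  set N : Matrix (Fin 3) (Fin 3) K := ((B⁻¹ : GL (Fin 3) K) : Matrix (Fin 3) (Fin 3) K) with hN
  have hMN : M * N = 1 := by
    rw [hM, hN]
    exact_mod_cast B.mul_inv
  have hfun : ∀ v, eval (M.mulVec v) F = c * eval v F := by
    intro v
    rw [← eval_substPoly_s13, hB, smul_eval]
  have hgrad : ∀ (v : Fin 3 → K) (j : Fin 3),
      (∑ i, M i j * eval (M.mulVec v) (pderiv i F)) = c * eval v (pderiv j F) := by
    intro v j
    have h1 := congrArg (eval v) (congrArg (pderiv j) hB)
    rw [pderiv_substPoly, (pderiv j).map_smul, smul_eval, map_sum] at h1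
    simp only [smul_eval, eval_substPoly_s13] at h1
    exact h1
  constructor
  · rw [hfun, hF0, mul_zero]
  · intro q hq1 hq2
    set q' : Fin 3 → K := N.mulVec q with hq'
    have hqq : M.mulVec q' = q := by
      rw [hq', Matrix.mulVec_mulVec, hMN, Matrix.one_mulVec]
    have hmv : ∀ i, (∑ j, M i j * q' j) = q i := by
      intro i
      rw [← hqq]
      simp [Matrix.mulVec, dotProduct]
    have htan : (∑ j, q' j * eval p (pderiv j F)) = 0 := by
      have step : c * (∑ j, q' j * eval p (pderiv j F)) = 0 := by
        calc c * (∑ j, q' j * eval p (pderiv j F))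
            = ∑ j, q' j * (c * eval p (pderiv j F)) := by
              rw [Finset.mul_sum]; apply Finset.sum_congr rfl; intros; ring
          _ = ∑ j, q' j * (∑ i, M i j * eval (M.mulVec p) (pderiv i F)) := by
              apply Finset.sum_congr rfl; intro j _; rw [hgrad p j]
          _ = ∑ j, ∑ i, q' j * (M i j * eval (M.mulVec p) (pderiv i F)) := by
              apply Finset.sum_congr rfl; intro j _; rw [Finset.mul_sum]
          _ = ∑ i, ∑ j, q' j * (M i j * eval (M.mulVec p) (pderiv i F)) := Finset.sum_comm
          _ = ∑ i, (∑ j, M i j * q' j) * eval (M.mulVec p) (pderiv i F) := by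
              apply Finset.sum_congr rfl; intro i _
              rw [Finset.sum_mul]; apply Finset.sum_congr rfl; intros; ring
          _ = ∑ i, q i * eval (M.mulVec p) (pderiv i F) := by
              apply Finset.sum_congr rfl; intro i _; rw [hmv]
          _ = 0 := hq1
      rcases mul_eq_zero.mp step with h | h
      · exact absurd h hc
      · exact h
    have hq'F : eval q' F = 0 := by
      have := hfun q'
      rw [hqq, hq2] at this
      rcases mul_eq_zero.mp this.symm with h | h
      · exact absurd h hc
      · exact h
    obtain ⟨t, ht⟩ := hTT q' htan hq'F
    exact ⟨t, by rw [← hqq, ht, Matrix.mulVec_smul]⟩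


lemma TT_e3 (d : ℕ) (hd : 5 ≤ d) (β : K) : TT (Fp d β) ![0,0,1] := by
  have hd0 : d ≠ 0 := by omega
  constructor
  · rw [evalFp]; simp [hd0]
  · intro q hq1 hq2
    have hψ0 : eval ![0,0,1] (pderiv 0 (Fp d β)) = 1 := by
      rw [evalPd0]; simp [show d - 1 ≠ 0 by omega]
    have hψ1 : eval ![0,0,1] (pderiv 1 (Fp d β)) = 0 := by
      rw [evalPd1]; simp [show d - 1 ≠ 0 by omega]
    have hψ2 : eval ![0,0,1] (pderiv 2 (Fp d β)) = 0 := by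
      rw [evalPd2]; simp
    rw [Fin.sum_univ_three, hψ0, hψ1, hψ2, mul_one, mul_zero, mul_zero, add_zero,
      add_zero] at hq1
    rw [evalFp, hq1] at hq2
    simp [hd0, show d - 1 ≠ 0 by omega, show d - 2 ≠ 0 by omega] at hq2
    refine ⟨q 2, ?_⟩
    funext i
    fin_cases i <;> simp [hq1, hq2]



lemma classify [IsAlgClosed K] [CharZero K] (d : ℕ) (hd : 5 ≤ d) (hodd : Odd d)
    (β : K) (hβ : β ≠ 0) (ζ : K) (hζ : IsPrimitiveRoot ζ (d-1))
    (B : GL (Fin 3) K) (c : Kˣ)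
    (hB : substPoly (B : Matrix (Fin 3) (Fin 3) K) (Fp d β) = (c : K) • (Fp d β)) :
    ∃ (k : ℕ) (a : K), a ≠ 0 ∧
      (B : Matrix (Fin 3) (Fin 3) K) = a • Matrix.diagonal ![1,1,ζ^k] := by
  have hd0 : d ≠ 0 := by omega
  have hd1 : d - 1 ≠ 0 := by omega
  have hcne : (c : K) ≠ 0 := c.ne_zero
  set M : Matrix (Fin 3) (Fin 3) K := (B : Matrix (Fin 3) (Fin 3) K) with hM
  have hfun : ∀ v, eval (M.mulVec v) (Fp d β) = (c : K) * eval v (Fp d β) := by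
    intro v; rw [← eval_substPoly_s13, hB, smul_eval]
  have hgrad : ∀ (v : Fin 3 → K) (j : Fin 3),
      (∑ i, M i j * eval (M.mulVec v) (pderiv i (Fp d β)))
        = (c : K) * eval v (pderiv j (Fp d β)) := by
    intro v j
    have h1 := congrArg (eval v) (congrArg (pderiv j) hB)
    rw [pderiv_substPoly, (pderiv j).map_smul, smul_eval, map_sum] at h1
    simp only [smul_eval, eval_substPoly_s13] at h1
    exact h1
  -- the image of (0,0,1) is proportional to (0,0,1)
  have hTTw := TT_transport (Fp d β) B (c : K) hcne hB ![0,0,1] (TT_e3 d hd β)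
  obtain ⟨h02, h12⟩ := TT_unique d hd β hβ _ hTTw
  have hcol : ∀ i, M.mulVec ![0,0,1] i = M i 2 := by
    intro i; simp [Matrix.mulVec, dotProduct, Fin.sum_univ_three]
  have hM02 : M 0 2 = 0 := by rw [← hcol 0]; exact h02
  have hM12 : M 1 2 = 0 := by rw [← hcol 1]; exact h12
  set g : K := M 2 2 with hgdef
  have hw : M.mulVec ![0,0,1] = ![0,0,g] := by
    funext i
    rw [hcol i]
    fin_cases i <;> simp [hM02, hM12, hgdef]
  -- determinant
  have hdet : M.det ≠ 0 := by
    have : IsUnit M.det := B.isUnit.map (Matrix.detMonoidHom)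
    exact this.ne_zero
  have hdet3 := Matrix.det_fin_three M
  have hgne : g ≠ 0 := by
    intro hh
    rw [hM02, hM12, ← hgdef, hh] at hdet3
    apply hdet
    rw [hdet3]; ring
  -- M 0 1 = 0
  have hψ0w : eval ![0,0,g] (pderiv 0 (Fp d β)) = g^(d-1) := by
    rw [evalPd0]; simp [hd1]
  have hψ1w : eval ![0,0,g] (pderiv 1 (Fp d β)) = 0 := by
    rw [evalPd1]; simp [hd1]
  have hψ2w : eval ![0,0,g] (pderiv 2 (Fp d β)) = 0 := by
    rw [evalPd2]; simp
  have hM01 : M 0 1 = 0 := by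
    have h1 := hgrad ![0,0,1] 1
    rw [hw, Fin.sum_univ_three, hψ0w, hψ1w, hψ2w, evalPd1] at h1
    simp [hd1] at h1
    rcases h1 with h | h
    · exact h
    · exact absurd h hgne
  -- names for entries
  set a : K := M 0 0 with hadef
  set p : K := M 1 0 with hpdef
  set q : K := M 1 1 with hqdef
  set r : K := M 2 0 with hrdef
  set s : K := M 2 1 with hsdef
  have hane : a ≠ 0 := by
    intro hh
    apply hdet
    rw [hdet3, hM01, hM02, hM12, hh]; ring
  have hqne : q ≠ 0 := by
    intro hh
    apply hdet
    rw [hdet3, hM01, hM02, hM12, hh]; ring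
  have hvec : ∀ x y z : K, M.mulVec ![x,y,z] = ![a*x, p*x + q*y, r*x + s*y + g*z] := by
    intro x y z
    funext i
    fin_cases i <;>
      simp [Matrix.mulVec, dotProduct, Fin.sum_univ_three, hM01, hM02, hM12,
        hadef, hpdef, hqdef, hrdef, hsdef, hgdef]
  have hfun2 : ∀ x y z : K,
      (a*x)^d + (p*x+q*y)^d + (r*x+s*y+g*z)^(d-1)*(a*x) + β*(a*x)^(d-2)*(p*x+q*y)^2
        = (c:K) * (x^d + y^d + z^(d-1)*x + β*x^(d-2)*y^2) := by
    intro x y z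
    have h := hfun ![x,y,z]
    rw [hvec, evalFp, evalFp] at h
    simpa using h
  have heven : Even (d-1) := Nat.Odd.sub_odd hodd odd_one
  have hI : ∀ z : K, a^d + p^d + (r+g*z)^(d-1)*a + β*a^(d-2)*p^2
      = (c:K) + (c:K)*z^(d-1) := by
    intro z
    have h := hfun2 1 0 z
    rw [zero_pow hd0] at h
    simp only [mul_one, mul_zero, add_zero, zero_add, one_pow] at h
    linear_combination h
  have hr0 : r = 0 := by
    have key : ∀ z : K, (r+g*z)^(d-1)*a = (r-g*z)^(d-1)*a := by
      intro z
      have h1 := hI z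
      have h2 := hI (-z)
      rw [show g*(-z) = -(g*z) from by ring] at h2
      rw [show r + -(g*z) = r - g*z from by ring] at h2
      rw [heven.neg_pow] at h2
      linear_combination h1 - h2
    have h3 := key (r/g)
    rw [show r + g*(r/g) = 2*r from by field_simp; ring] at h3
    rw [show r - g*(r/g) = 0 from by field_simp; ring] at h3
    rw [zero_pow hd1, zero_mul] at h3
    rcases mul_eq_zero.mp h3 with h | h
    · have h4 := pow_eq_zero_iff hd1 |>.mp h
      rcases mul_eq_zero.mp h4 with h5 | h5
      · exact absurd h5 two_ne_zero
      · exact h5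
    · exact absurd h hane
  have hc0 : a^d + p^d + β*a^(d-2)*p^2 = (c:K) := by
    have h0 := hI 0
    rw [hr0, mul_zero, add_zero, zero_pow hd1] at h0
    linear_combination h0
  have hgc : g^(d-1)*a = (c:K) := by
    have h1 := hI 1
    rw [hr0, mul_one, zero_add, one_pow] at h1
    linear_combination h1 - hc0
  have hJ : ∀ y z : K, a^d + (p+q*y)^d + (s*y+g*z)^(d-1)*a + β*a^(d-2)*(p+q*y)^2
      = (c:K)*(1 + y^d + z^(d-1) + β*y^2) := by
    intro y z
    have h := hfun2 1 y z
    rw [hr0] at h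
    rw [show (0:K)*1+s*y+g*z = s*y+g*z from by ring] at h
    rw [show p*1+q*y = p+q*y from by ring] at h
    simp only [mul_one, one_pow] at h
    linear_combination h
  have hs0 : s = 0 := by
    have key : ∀ y : K, s*y = 0 := by
      intro y
      have h1 := hJ y (s*y/g)
      have h2 := hJ y (-(s*y/g))
      rw [show g*(-(s*y/g)) = -(g*(s*y/g)) from by ring] at h2
      rw [show g*(s*y/g) = s*y from by field_simp] at h1 h2
      rw [show s*y + -(s*y) = 0 from by ring] at h2
      rw [zero_pow hd1, zero_mul] at h2
      rw [show s*y + s*y = 2*(s*y) from by ring] at h1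
      rw [heven.neg_pow] at h2
      have h3 : (2*(s*y))^(d-1)*a = 0 := by linear_combination h1 - h2
      rcases mul_eq_zero.mp h3 with h | h
      · have h4 := pow_eq_zero_iff hd1 |>.mp h
        rcases mul_eq_zero.mp h4 with h5 | h5
        · exact absurd h5 two_ne_zero
        · exact h5
      · exact absurd h hane
    have := key 1
    rwa [mul_one] at this
  have hK : ∀ y : K, a^d + (p+q*y)^d + β*a^(d-2)*(p+q*y)^2 = (c:K)*(1+y^d+β*y^2) := by
    intro y
    have h := hJ y 0
    rw [hs0] at h
    rw [show (0:K)*y+g*0 = 0 from by ring] at h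
    rw [zero_pow hd1] at h
    linear_combination h
  have hEy : ∀ y : K, (p+q*y)^d + (p-q*y)^d
      = 2*(c:K) + 2*(c:K)*β*y^2 - 2*a^d - 2*β*a^(d-2)*p^2 - 2*β*a^(d-2)*q^2*y^2 := by
    intro y
    have h1 := hK y
    have h2 := hK (-y)
    rw [show p+q*(-y) = p-q*y from by ring] at h2
    rw [hodd.neg_pow] at h2
    linear_combination h1 + h2
  have hp0 : p = 0 := by
    have hPz : ((Polynomial.C q * Polynomial.X + Polynomial.C p)^d
        + (Polynomial.C (-q) * Polynomial.X + Polynomial.C p)^d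
        - (Polynomial.C (2*(c:K) - 2*a^d - 2*β*a^(d-2)*p^2)
           + Polynomial.C (2*(c:K)*β - 2*β*a^(d-2)*q^2) * Polynomial.X^2) : Polynomial K)
        = 0 := by
      apply Polynomial.funext
      intro y
      simp only [Polynomial.eval_add, Polynomial.eval_sub, Polynomial.eval_mul,
        Polynomial.eval_pow, Polynomial.eval_C, Polynomial.eval_X, Polynomial.eval_zero]
      rw [show q*y+p = p+q*y from by ring]
      rw [show -q*y+p = p-q*y from by ring]
      linear_combination hEy y
    have hco := congrArg (fun P : Polynomial K => P.coeff (d-1)) hPz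
    simp only [Polynomial.coeff_add, Polynomial.coeff_sub, Polynomial.coeff_zero] at hco
    rw [coeff_CXC_pow, coeff_CXC_pow, if_pos (by omega : d-1 ≤ d),
      if_pos (by omega : d-1 ≤ d)] at hco
    rw [Polynomial.coeff_C, if_neg (by omega : ¬(d-1 = 0))] at hco
    rw [Polynomial.coeff_C_mul, Polynomial.coeff_X_pow, if_neg (by omega : ¬(d-1 = 2)),
      mul_zero] at hco
    rw [Nat.choose_symm (by omega : 1 ≤ d), Nat.choose_one_right] at hco
    rw [show d-(d-1) = 1 from by omega, pow_one] at hco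
    rw [heven.neg_pow] at hco
    have h5 : (2*(d:K)*q^(d-1))*p = 0 := by linear_combination hco
    rcases mul_eq_zero.mp h5 with h | h
    · exfalso
      rcases mul_eq_zero.mp h with h6 | h6
      · rcases mul_eq_zero.mp h6 with h7 | h7
        · exact two_ne_zero h7
        · exact Nat.cast_ne_zero.mpr hd0 h7
      · exact pow_ne_zero _ hqne h6
    · exact h
  have hK0 : ∀ y : K, a^d + (q*y)^d + β*a^(d-2)*(q*y)^2 = (c:K)*(1+y^d+β*y^2) := by
    intro y
    have h := hK y
    rw [hp0, zero_add] at h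
    exact h
  have hc_ad : a^d = (c:K) := by
    have h := hK0 0
    rw [mul_zero, zero_pow hd0] at h
    linear_combination h
  have hqd : q^d = (c:K) := by
    have h1 := hK0 1
    have h2 := hK0 (-1)
    rw [mul_one] at h1
    rw [show q*(-1) = -q from by ring] at h2
    rw [hodd.neg_pow] at h2
    rw [hodd.neg_pow] at h2
    linear_combination (h1 - h2) / 2
  have hq2 : a^(d-2)*q^2 = (c:K) := by
    have h1 := hK0 1
    rw [mul_one] at h1
    have hb : β*(a^(d-2)*q^2) = β*(c:K) := by
      linear_combination h1 - hc_ad - hqd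
    exact mul_left_cancel₀ hβ hb
  have hpowa : a^(d-2)*a^2 = a^d := by
    rw [← pow_add]
    exact congrArg (fun n => a ^ n) (by omega : d-2+2 = d)
  have hqa : q = a := by
    have h0 : a^(d-2)*q^2 = a^(d-2)*a^2 := by
      rw [hpowa, hq2, hc_ad]
    have h1 : q^2 = a^2 := mul_left_cancel₀ (pow_ne_zero _ hane) h0
    have h2 : (q-a)*(q+a) = 0 := by linear_combination h1
    rcases mul_eq_zero.mp h2 with h | h
    · linear_combination h
    · exfalso
      have hqe : q = -a := by linear_combination h
      rw [hqe, hodd.neg_pow] at hqd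
      have : a^d = 0 := by linear_combination (hc_ad - hqd) / 2
      exact hane (pow_eq_zero_iff hd0 |>.mp this)
  have hga : g^(d-1) = a^(d-1) := by
    have hpa : a^(d-1)*a = a^d := by
      rw [← pow_succ]
      exact congrArg (fun n => a ^ n) (by omega : d-1+1 = d)
    have h0 : g^(d-1)*a = a^(d-1)*a := by rw [hpa, hgc, hc_ad]
    exact mul_right_cancel₀ hane h0
  haveI : NeZero (d-1) := ⟨hd1⟩
  have hpow1 : (g/a)^(d-1) = 1 := by
    rw [div_pow, hga, div_self (pow_ne_zero _ hane)]
  obtain ⟨k, hk, hζk⟩ := hζ.eq_pow_of_pow_eq_one hpow1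
  have hgak : g = a * ζ^k := by
    rw [hζk]
    field_simp
  refine ⟨k, a, hane, ?_⟩
  show M = a • Matrix.diagonal ![1,1,ζ^k]
  have e00 : M 0 0 = a := hadef.symm
  have e10 : M 1 0 = 0 := by rw [← hpdef]; exact hp0
  have e11 : M 1 1 = a := by rw [← hqdef]; exact hqa
  have e22 : M 2 2 = a * ζ^k := by rw [← hgdef]; exact hgak
  have e20 : M 2 0 = 0 := by rw [← hrdef]; exact hr0
  have e21 : M 2 1 = 0 := by rw [← hsdef]; exact hs0
  funext i j
  fin_cases i <;> fin_cases j <;>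
    simp [Matrix.diagonal, e00, e10, e11, e20, e21, e22, hM01, hM02, hM12]




lemma substPoly_diag (d : ℕ) (β : K) (ζ : K) (hζ1 : ζ^(d-1) = 1) :
    substPoly (Matrix.diagonal ![1,1,ζ]) (Fp d β) = Fp d β := by
  have hfun : (fun i => ∑ j, Matrix.diagonal ![1,1,ζ] i j • X j)
      = (![X 0, X 1, ζ • X 2] : Fin 3 → MvPolynomial (Fin 3) K) := by
    funext i
    fin_cases i <;> simp [Fin.sum_univ_three, Matrix.diagonal]
  rw [substPoly, hfun, Fp]
  simp only [map_add, _root_.map_mul, map_pow, aeval_X, aeval_C,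
    Matrix.cons_val_zero, Matrix.cons_val_one, Matrix.head_cons,
    Matrix.cons_val_two, Matrix.tail_cons, algebraMap_eq]
  rw [smul_pow, hζ1, one_smul]

/-- for odd `d ≥ 5` and `β ≠ 0` with
`F = X^d + Y^d + Z^(d-1)·X + β·X^(d-2)·Y²` nonsingular, `Aut(F)` is the cyclic group
of order `d-1` generated by the class of `diag(1,1,ζ_(d-1))`. -/
theorem stmt13 {K : Type*} [Field K] [IsAlgClosed K] [CharZero K]
    (d : ℕ) (hd : 5 ≤ d) (hodd : Odd d) (β : K) (hβ : β ≠ 0)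
    (F : MvPolynomial (Fin 3) K)
    (hF : F = X 0 ^ d + X 1 ^ d + X 2 ^ (d - 1) * X 0 + C β * X 0 ^ (d - 2) * X 1 ^ 2)
    (hns : IsNonsingular F)
    (ζ : K) (hζ : IsPrimitiveRoot ζ (d - 1))
    (A : GL (Fin 3) K)
    (hA : (A : Matrix (Fin 3) (Fin 3) K) = Matrix.diagonal ![1, 1, ζ]) :
    projAut F
      = Subgroup.zpowers (QuotientGroup.mk' (Subgroup.center (GL (Fin 3) K)) A) ∧
    Nat.card ↥(projAut F) = d - 1 := by
  have hd0 : d ≠ 0 := by omega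
  have hd1 : d - 1 ≠ 0 := by omega
  have hFF : F = Fp d β := hF
  have hζ1 : ζ^(d-1) = 1 := hζ.pow_eq_one
  have hAmem : A ∈ autGL F := by
    refine ⟨1, ?_⟩
    rw [hA, hFF, substPoly_diag d β ζ hζ1, Units.val_one, one_smul]
  have hApow : ∀ n : ℕ, ((A^n : GL (Fin 3) K) : Matrix (Fin 3) (Fin 3) K)
      = Matrix.diagonal ![1,1,ζ^n] := by
    intro n
    rw [Units.val_pow_eq_pow_val, hA, Matrix.diagonal_pow]
    have hv : (![1,1,ζ] : Fin 3 → K)^n = ![1,1,ζ^n] := by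
      funext i
      fin_cases i <;> simp
    rw [hv]
  set π := QuotientGroup.mk' (Subgroup.center (GL (Fin 3) K)) with hπ
  have hss : (!![0,0,1;0,1,0;1,0,0] : Matrix (Fin 3) (Fin 3) K) * !![0,0,1;0,1,0;1,0,0]
      = 1 := by
    norm_num [Matrix.mul_fin_three]
    exact Matrix.one_fin_three.symm
  set S : GL (Fin 3) K := ⟨!![0,0,1;0,1,0;1,0,0], !![0,0,1;0,1,0;1,0,0], hss, hss⟩ with hSdef
  have hker : ∀ n : ℕ, (π A)^n = 1 ↔ (d-1) ∣ n := by
    intro n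
    rw [← _root_.map_pow]
    constructor
    · intro h
      have hmem : A^n ∈ Subgroup.center (GL (Fin 3) K) := by
        rw [← QuotientGroup.ker_mk' (Subgroup.center (GL (Fin 3) K)),
          MonoidHom.mem_ker]
        exact h
      have hcomm := Subgroup.mem_center_iff.mp hmem S
      have hmat := congrArg
        (fun u : GL (Fin 3) K => (u : Matrix (Fin 3) (Fin 3) K) 0 2) hcomm
      simp only [Units.val_mul, hApow n, hSdef] at hmat
      rw [Matrix.mul_apply, Matrix.mul_apply, Fin.sum_univ_three, Fin.sum_univ_three] at hmat
      simp [Matrix.diagonal] at hmat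
      exact (hζ.pow_eq_one_iff_dvd n).mp hmat
    · intro hdvd
      have hζn : ζ^n = 1 := (hζ.pow_eq_one_iff_dvd n).mpr hdvd
      have hAn : (A^n : GL (Fin 3) K) = 1 := by
        apply Units.ext
        rw [hApow n, hζn]
        have hv : ![(1:K),1,1] = (fun _ => (1:K)) := by
          funext i; fin_cases i <;> rfl
        rw [hv, Matrix.diagonal_one, Units.val_one]
      rw [hAn, _root_.map_one]
  have horder : orderOf (π A) = d - 1 := by
    rw [orderOf_eq_iff (by omega : 0 < d - 1)]
    refine ⟨(hker (d-1)).mpr dvd_rfl, fun m hmlt hmpos h1 => ?_⟩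
    have := Nat.le_of_dvd hmpos ((hker m).mp h1)
    omega
  have heq : projAut F = Subgroup.zpowers (π A) := by
    apply le_antisymm
    · rintro x hx
      obtain ⟨B, hBmem, rfl⟩ := Subgroup.mem_map.mp hx
      obtain ⟨c, hc⟩ := hBmem
      have hc' : substPoly (B : Matrix (Fin 3) (Fin 3) K) (Fp d β) = (c:K) • Fp d β := by
        rw [← hFF]; exact hc
      obtain ⟨k, a, ha, hmat⟩ := classify d hd hodd β hβ ζ hζ B c hc'
      have hinv : (a • (1 : Matrix (Fin 3) (Fin 3) K)) * (a⁻¹ • 1) = 1 := by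
        rw [Matrix.smul_mul, Matrix.mul_smul, smul_smul, one_mul,
          mul_inv_cancel₀ ha, one_smul]
      have hinv2 : (a⁻¹ • (1 : Matrix (Fin 3) (Fin 3) K)) * (a • 1) = 1 := by
        rw [Matrix.smul_mul, Matrix.mul_smul, smul_smul, one_mul,
          inv_mul_cancel₀ ha, one_smul]
      set u : GL (Fin 3) K := ⟨a • 1, a⁻¹ • 1, hinv, hinv2⟩ with hu
      have hucen : u ∈ Subgroup.center (GL (Fin 3) K) := by
        rw [Subgroup.mem_center_iff]
        intro g
        apply Units.ext
        show (g : Matrix (Fin 3) (Fin 3) K) * (a • 1) = (a • 1) * (g : Matrix (Fin 3) (Fin 3) K)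
        rw [Matrix.mul_smul, Matrix.smul_mul, mul_one, one_mul]
      have hBu : B = u * A^k := by
        apply Units.ext
        show (B : Matrix (Fin 3) (Fin 3) K)
          = (a • 1) * ((A^k : GL (Fin 3) K) : Matrix (Fin 3) (Fin 3) K)
        rw [hApow k, hmat, Matrix.smul_mul, one_mul]
      rw [hBu, _root_.map_mul]
      have hu1 : π u = 1 := by
        rw [← MonoidHom.mem_ker, QuotientGroup.ker_mk']
        exact hucen
      rw [hu1, one_mul, _root_.map_pow]
      exact Subgroup.mem_zpowers_iff.mpr ⟨(k:ℤ), by rw [zpow_natCast]⟩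
    · rw [Subgroup.zpowers_le]
      exact Subgroup.mem_map_of_mem _ hAmem
  exact ⟨heq, by rw [heq, Nat.card_zpowers, horder]⟩

end
end
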